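/- arXiv:1404.5350 — 3 statements merged into one kernel-verified Lean document; each statement's English description precedes it below -/
import Mathlib

section
/- Let A be an m×n real matrix with b ∈ ℝᵐ and λ > 0, and consider the LASSO problem min_{x∈ℝⁿ} F(x) = (1/2)‖Ax − b‖² + λ‖x‖₁. Then the local error bound holds: for every ν ≥ inf F there exist δ > 0 and τ > 0 such that dist(x, closure(X*)) ≤ τ·‖x − prox_{λ‖·‖₁}(x − Aᵀ(Ax − b))‖ for all x ∈ ℝⁿ with F(x) ≤ ν and ‖x − prox_{λ‖·‖₁}(x − Aᵀ(Ax − b))‖ ≤ δ, where X* is the set of minimizers of F. -/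
open Set Finset Matrix

open Filter Metric Topology
open scoped RealInnerProductSpace
set_option maxHeartbeats 1000000

/-- `p` is the proximal point `prox_φ(x)` over `ℝⁿ`: the minimizer over `y` of
`φ(y) + (1/2)‖y − x‖²`. -/
def IsProx {E : Type*} [NormedAddCommGroup E] [InnerProductSpace ℝ E]
    (φ : E → ℝ) (x p : E) : Prop :=
  ∀ y, φ p + (1 / 2) * ‖p - x‖ ^ 2 ≤ φ y + (1 / 2) * ‖y - x‖ ^ 2

lemma nonneg_of_forall_small (a b : ℝ) (h : ∀ t : ℝ, 0 < t → t ≤ 1 → 0 ≤ a + t * b) :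
    0 ≤ a := by
  by_contra hneg
  push_neg at hneg
  set t : ℝ := min 1 (-a / (2 * (|b| + 1))) with ht
  have hb1 : (0:ℝ) < |b| + 1 := by positivity
  have ht0 : 0 < t := by
    apply lt_min one_pos
    apply div_pos (by linarith) (by positivity)
  have ht1 : t ≤ 1 := min_le_left _ _
  have ht2 : t ≤ -a / (2 * (|b| + 1)) := min_le_right _ _
  have h3 : t * (|b| + 1) ≤ -a / 2 := by
    have h5 := (le_div_iff₀ (by positivity : (0:ℝ) < 2 * (|b| + 1))).mp ht2
    nlinarith
  have h4 : t * b ≤ t * (|b| + 1) := by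
    apply mul_le_mul_of_nonneg_left _ ht0.le
    nlinarith [le_abs_self b]
  have := h t ht0 ht1
  nlinarith

lemma norm_le_sum_abs {n : ℕ} (x : EuclideanSpace ℝ (Fin n)) : ‖x‖ ≤ ∑ i, |x i| := by
  rw [EuclideanSpace.norm_eq]
  have h1 : ∑ i, ‖x i‖ ^ 2 ≤ (∑ i, |x i|) ^ 2 := by
    simp only [Real.norm_eq_abs]
    exact Finset.sum_sq_le_sq_sum_of_nonneg (fun i _ => abs_nonneg _)
  calc Real.sqrt (∑ i, ‖x i‖ ^ 2) ≤ Real.sqrt ((∑ i, |x i|) ^ 2) := Real.sqrt_le_sqrt h1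
    _ = ∑ i, |x i| := Real.sqrt_sq (Finset.sum_nonneg fun i _ => abs_nonneg _)

lemma prox_subgrad {n : ℕ} (lam : ℝ) (hlam : 0 ≤ lam) (w q : EuclideanSpace ℝ (Fin n))
    (h : IsProx (fun y => lam * (∑ i, |y i|)) w q) (y : EuclideanSpace ℝ (Fin n)) :
    lam * (∑ i, |q i|) + ⟪w - q, y - q⟫ ≤ lam * (∑ i, |y i|) := by
  have key : ∀ t : ℝ, 0 < t → t ≤ 1 →
      0 ≤ (lam * (∑ i, |y i|) - lam * (∑ i, |q i|) + ⟪q - w, y - q⟫) +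
        t * ((1/2) * ‖y - q‖ ^ 2) := by
    intro t ht0 ht1
    have hmem := h (q + t • (y - q))
    have hconv : lam * ∑ i, |(q + t • (y - q)) i| ≤
        (1 - t) * (lam * (∑ i, |q i|)) + t * (lam * (∑ i, |y i|)) := by
      have hsum : ∑ i, |(q + t • (y - q)) i| ≤ ∑ i, ((1 - t) * |q i| + t * |y i|) := by
        apply Finset.sum_le_sum
        intro i _
        have : (q + t • (y - q)) i = (1 - t) * q i + t * y i := by
          simp [PiLp.add_apply, PiLp.smul_apply, PiLp.sub_apply, smul_eq_mul]
          ring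
        rw [this]
        calc |(1 - t) * q i + t * y i| ≤ |(1 - t) * q i| + |t * y i| := abs_add_le _ _
          _ = (1 - t) * |q i| + t * |y i| := by
              rw [abs_mul, abs_mul, abs_of_nonneg (by linarith), abs_of_nonneg ht0.le]
      calc lam * ∑ i, |(q + t • (y - q)) i| ≤ lam * ∑ i, ((1 - t) * |q i| + t * |y i|) :=
            mul_le_mul_of_nonneg_left hsum hlam
        _ = (1 - t) * (lam * (∑ i, |q i|)) + t * (lam * (∑ i, |y i|)) := by
            rw [Finset.sum_add_distrib, ← Finset.mul_sum, ← Finset.mul_sum]; ring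
    have hnorm : ‖q + t • (y - q) - w‖ ^ 2 =
        ‖q - w‖ ^ 2 + 2 * (t * ⟪q - w, y - q⟫) + t ^ 2 * ‖y - q‖ ^ 2 := by
      have : q + t • (y - q) - w = (q - w) + t • (y - q) := by abel
      rw [this, norm_add_sq_real, real_inner_smul_right, norm_smul]
      simp [abs_of_nonneg ht0.le, mul_pow]
    have h2 : 0 ≤ t * (lam * (∑ i, |y i|) - lam * (∑ i, |q i|) + ⟪q - w, y - q⟫)
        + t ^ 2 * ((1/2) * ‖y - q‖ ^ 2) := by nlinarith [hmem, hconv, hnorm]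
    nlinarith [h2, ht0]
  have h0 := nonneg_of_forall_small _ _ key
  have hinner : ⟪w - q, y - q⟫ = - ⟪q - w, y - q⟫ := by
    rw [← inner_neg_left]; norm_num
  linarith [h0, hinner.ge, hinner.le]

open scoped RealInnerProductSpace

lemma euclid_inner_eq {n : ℕ} (x y : EuclideanSpace ℝ (Fin n)) : ⟪x, y⟫ = ∑ i, x i * y i := by
  simp [PiLp.inner_apply, RCLike.inner_apply, mul_comm]

lemma toEuclideanLin_coord {m n : ℕ} (A : Matrix (Fin m) (Fin n) ℝ)
    (x : EuclideanSpace ℝ (Fin n)) (j : Fin m) :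
    (Matrix.toEuclideanLin A x) j = ∑ i, A j i * x i := by
  rfl

lemma adjoint_inner {m n : ℕ} (A : Matrix (Fin m) (Fin n) ℝ)
    (u : EuclideanSpace ℝ (Fin m)) (v : EuclideanSpace ℝ (Fin n)) :
    ⟪Matrix.toEuclideanLin Aᵀ u, v⟫ = ⟪u, Matrix.toEuclideanLin A v⟫ := by
  rw [euclid_inner_eq, euclid_inner_eq]
  simp only [toEuclideanLin_coord, Matrix.transpose_apply, Finset.sum_mul, Finset.mul_sum]
  rw [Finset.sum_comm]
  congr 1; ext i; congr 1; ext j; ring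


lemma quad_growth {n m : ℕ} (T : EuclideanSpace ℝ (Fin n) →ₗ[ℝ] EuclideanSpace ℝ (Fin m))
    (ybar : EuclideanSpace ℝ (Fin m)) (lam : ℝ) (hlam : 0 < lam)
    (g : EuclideanSpace ℝ (Fin n)) (hg : ∀ i, |g i| ≤ lam)
    (S : Set (EuclideanSpace ℝ (Fin n))) (hSne : S.Nonempty) (hSclosed : IsClosed S)
    (hS : ∀ x, x ∈ S ↔ (T x = ybar ∧ ∀ i, lam * |x i| + g i * x i = 0))
    (R : ℝ) :
    ∃ μ > (0:ℝ), ∀ x ∈ Metric.closedBall (0 : EuclideanSpace ℝ (Fin n)) R,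
      μ * (Metric.infDist x S) ^ 2 ≤
        (1/2) * ‖T x - ybar‖ ^ 2 + ∑ i, (lam * |x i| + g i * x i) := by
  set G : EuclideanSpace ℝ (Fin n) → ℝ := fun x => (1/2) * ‖T x - ybar‖ ^ 2 + ∑ i, (lam * |x i| + g i * x i)
    with hGdef
  have hterm : ∀ (i : Fin n) (s : ℝ), 0 ≤ lam * |s| + g i * s := by
    intro i s
    have h1 : |g i| * |s| ≤ lam * |s| := mul_le_mul_of_nonneg_right (hg i) (abs_nonneg s)
    have h2 : -(g i * s) ≤ |g i * s| := neg_le_abs _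
    rw [abs_mul] at h2
    linarith
  have hG0 : ∀ x, 0 ≤ G x := fun x =>
    add_nonneg (by positivity) (Finset.sum_nonneg fun i _ => hterm i _)
  have hGcont : Continuous G := by
    apply Continuous.add
    · exact continuous_const.mul
        (((T.continuous_of_finiteDimensional.sub continuous_const).norm).pow 2)
    · apply continuous_finset_sum
      intro i _
      exact (continuous_const.mul ((EuclideanSpace.proj (𝕜 := ℝ) i).continuous.abs)).add
        (continuous_const.mul (EuclideanSpace.proj (𝕜 := ℝ) i).continuous)
  by_contra hcon
  push_neg at hcon
  have hseq : ∀ k : ℕ, ∃ x ∈ Metric.closedBall (0:EuclideanSpace ℝ (Fin n)) R,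
      G x < (1/(k+1 : ℝ)) * (Metric.infDist x S) ^ 2 := by
    intro k
    obtain ⟨x, hx1, hx2⟩ := hcon (1/(k+1 : ℝ)) (by positivity)
    exact ⟨x, hx1, hx2⟩
  choose x hxball hxlt using hseq
  set d : ℕ → ℝ := fun k => Metric.infDist (x k) S with hddef
  have hd_nonneg : ∀ k, 0 ≤ d k := fun k => Metric.infDist_nonneg
  have hd_pos : ∀ k, 0 < d k := by
    intro k
    have h1 := hxlt k
    have h2 := hG0 (x k)
    by_contra hc
    push_neg at hc
    have : d k = 0 := le_antisymm hc (hd_nonneg k)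
    rw [show Metric.infDist (x k) S = d k from rfl, this] at h1
    simp at h1
    linarith
  choose u huS hud using fun k => hSclosed.exists_infDist_eq_dist hSne (x k)
  have hxu : ∀ k, ‖x k - u k‖ = d k := fun k => by
    rw [← dist_eq_norm, ← hud k]
  set δ : ℕ → EuclideanSpace ℝ (Fin n) := fun k => (d k)⁻¹ • (x k - u k) with hδdef
  have hδn : ∀ k, ‖δ k‖ = 1 := by
    intro k
    rw [hδdef]
    simp only [norm_smul, norm_inv, Real.norm_eq_abs, abs_of_pos (hd_pos k), hxu k]
    rw [inv_mul_cancel₀ (hd_pos k).ne']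
  have hrecon : ∀ k, x k = u k + (d k) • δ k := by
    intro k
    rw [hδdef]
    simp only [smul_smul, mul_inv_cancel₀ (hd_pos k).ne', one_smul]
    abel
  -- compactness extraction
  have hK : IsCompact ((Metric.closedBall (0:EuclideanSpace ℝ (Fin n)) R) ×ˢ (Metric.sphere (0:EuclideanSpace ℝ (Fin n)) 1)) :=
    (isCompact_closedBall _ _).prod (isCompact_sphere _ _)
  obtain ⟨⟨xh, δh⟩, hmem, ρ, hρ, hρt⟩ := hK.tendsto_subseq
    (x := fun k => (x k, δ k))
    (fun k => Set.mk_mem_prod (hxball k) (by simp [hδn k]))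
  have hxt : Tendsto (fun k => x (ρ k)) atTop (𝓝 xh) :=
    (continuous_fst.tendsto (xh, δh)).comp hρt
  have hδt : Tendsto (fun k => δ (ρ k)) atTop (𝓝 δh) :=
    (continuous_snd.tendsto (xh, δh)).comp hρt
  have hδh1 : ‖δh‖ = 1 := by
    have := hmem.2
    simpa using this
  obtain ⟨s₀, hs₀⟩ := hSne
  set Db : ℝ := R + ‖s₀‖ with hDb
  have hR0 : 0 ≤ R := (norm_nonneg _).trans (mem_closedBall_zero_iff.mp (hxball 0))
  have hdDb : ∀ k, d k ≤ Db := by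
    intro k
    have h1 : d k ≤ dist (x k) s₀ := Metric.infDist_le_dist_of_mem hs₀
    have h2 : dist (x k) s₀ ≤ ‖x k‖ + ‖s₀‖ := by
      rw [dist_eq_norm]; exact norm_sub_le _ _
    have h3 : ‖x k‖ ≤ R := mem_closedBall_zero_iff.mp (hxball k)
    linarith
  have hDb0 : 0 ≤ Db := le_trans (hd_nonneg 0) (hdDb 0)
  have hfrac : ∀ k : ℕ, (1 / (ρ k + 1 : ℝ)) ≤ 1 / (k+1 : ℝ) := by
    intro k
    apply one_div_le_one_div_of_le (by positivity)
    have hkk : (k:ℝ) ≤ ρ k := by exact_mod_cast hρ.le_apply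
    linarith
  have hGρ : ∀ k : ℕ, G (x (ρ k)) < (1/(k+1:ℝ)) * Db ^ 2 := by
    intro k
    have h1 := hxlt (ρ k)
    have h2 : Metric.infDist (x (ρ k)) S ^ 2 ≤ Db ^ 2 := by
      have := hdDb (ρ k)
      have := hd_nonneg (ρ k)
      nlinarith
    calc G (x (ρ k)) < (1/(ρ k+1:ℝ)) * Metric.infDist (x (ρ k)) S ^ 2 := h1
      _ ≤ (1/(k+1:ℝ)) * Db ^ 2 := by
          apply mul_le_mul (hfrac k) h2 (by positivity) (by positivity)
  have hblim : Tendsto (fun k : ℕ => (1/(k+1:ℝ)) * Db ^ 2) atTop (𝓝 0) := by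
    have h1 : Tendsto (fun k : ℕ => (1/(k+1:ℝ))) atTop (𝓝 0) :=
      tendsto_one_div_add_atTop_nhds_zero_nat
    simpa using h1.mul_const (Db ^ 2)
  have hG0lim : Tendsto (fun k => G (x (ρ k))) atTop (𝓝 0) :=
    squeeze_zero (fun k => hG0 _) (fun k => (hGρ k).le) hblim
  have hGxh : G xh = 0 :=
    tendsto_nhds_unique (hGcont.continuousAt.tendsto.comp hxt) hG0lim
  have hsum_xh : ∑ i, (lam * |xh i| + g i * xh i) = 0 := by
    have h1 : (0:ℝ) ≤ ∑ i, (lam * |xh i| + g i * xh i) :=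
      Finset.sum_nonneg fun i _ => hterm i _
    have h2 : (0:ℝ) ≤ (1/2) * ‖T xh - ybar‖ ^ 2 := by positivity
    have h3 : (1/2) * ‖T xh - ybar‖ ^ 2 + ∑ i, (lam * |xh i| + g i * xh i) = 0 := hGxh
    linarith
  have hxhS : xh ∈ S := by
    rw [hS]
    constructor
    · have h1 : (0:ℝ) ≤ ∑ i, (lam * |xh i| + g i * xh i) :=
        Finset.sum_nonneg fun i _ => hterm i _
      have h3 : (1/2) * ‖T xh - ybar‖ ^ 2 + ∑ i, (lam * |xh i| + g i * xh i) = 0 := hGxh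
      have h4 : ‖T xh - ybar‖ ^ 2 = 0 := by nlinarith [sq_nonneg ‖T xh - ybar‖]
      have h5 : ‖T xh - ybar‖ = 0 := by
        have := sq_nonneg ‖T xh - ybar‖
        nlinarith [norm_nonneg (T xh - ybar)]
      rw [norm_eq_zero, sub_eq_zero] at h5
      exact h5
    · intro i
      exact (Finset.sum_eq_zero_iff_of_nonneg (fun i _ => hterm i _)).mp hsum_xh i
        (Finset.mem_univ i)
  have hd0 : Tendsto (fun k => d (ρ k)) atTop (𝓝 0) := by
    have h1 : Tendsto (fun k => Metric.infDist (x (ρ k)) S) atTop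
        (𝓝 (Metric.infDist xh S)) :=
      ((Metric.continuous_infDist_pt S).tendsto xh).comp hxt
    rwa [Metric.infDist_zero_of_mem hxhS] at h1
  have hueq : ∀ k, u k = x k - (d k) • δ k := by
    intro k
    rw [hrecon k]; abel
  have hut : Tendsto (fun k => u (ρ k)) atTop (𝓝 xh) := by
    have h1 : Tendsto (fun k => x (ρ k) - (d (ρ k)) • δ (ρ k)) atTop
        (𝓝 (xh - (0:ℝ) • δh)) := hxt.sub (hd0.smul hδt)
    simp only [zero_smul, sub_zero] at h1
    exact h1.congr (fun k => (hueq (ρ k)).symm)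
  have hδcoord : ∀ i, Tendsto (fun k => δ (ρ k) i) atTop (𝓝 (δh i)) := fun i =>
    (((EuclideanSpace.proj (𝕜 := ℝ) i).continuous.tendsto δh).comp hδt)
  have hu_T : ∀ k, T (u k) = ybar := fun k => ((hS _).mp (huS k)).1
  have hu_term : ∀ k i, lam * |u k i| + g i * u k i = 0 := fun k i =>
    ((hS _).mp (huS k)).2 i
  have hTδh : T δh = 0 := by
    have h1 : ∀ k, ‖T (δ (ρ k))‖ ^ 2 ≤ 2 * (1/(k+1:ℝ)) := by
      intro k
      have h2 := hxlt (ρ k)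
      have h3 : T (x (ρ k)) - ybar = (d (ρ k)) • T (δ (ρ k)) := by
        rw [hrecon (ρ k), map_add, _root_.map_smul, hu_T (ρ k)]
        abel
      have h4 : ‖T (x (ρ k)) - ybar‖ ^ 2 = (d (ρ k))^2 * ‖T (δ (ρ k))‖ ^ 2 := by
        rw [h3, norm_smul, Real.norm_eq_abs, abs_of_pos (hd_pos (ρ k)), mul_pow]
      have h5 : (0:ℝ) ≤ ∑ i, (lam * |x (ρ k) i| + g i * x (ρ k) i) :=
        Finset.sum_nonneg fun i _ => hterm i _
      have h6 : (1/2) * ((d (ρ k))^2 * ‖T (δ (ρ k))‖ ^ 2)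
          < (1/(ρ k+1:ℝ)) * (d (ρ k)) ^ 2 := by
        rw [← h4]
        have : Metric.infDist (x (ρ k)) S = d (ρ k) := rfl
        rw [this] at h2
        simp only [hGdef] at h2
        linarith
      have h7 : (1/(ρ k+1:ℝ)) ≤ (1/(k+1:ℝ)) := hfrac k
      have h8 := hd_pos (ρ k)
      have h9 : (1/2) * ‖T (δ (ρ k))‖ ^ 2 < (1/(ρ k+1:ℝ)) := by
        have h10 : ((1/2) * ‖T (δ (ρ k))‖ ^ 2) * (d (ρ k))^2
            < (1/(ρ k+1:ℝ)) * (d (ρ k))^2 := by nlinarith [h6]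
        exact lt_of_mul_lt_mul_right h10 (by positivity)
      linarith
    have h2 : Tendsto (fun k => ‖T (δ (ρ k))‖ ^ 2) atTop (𝓝 (‖T δh‖ ^ 2)) := by
      have hc : Continuous fun v : EuclideanSpace ℝ (Fin n) => ‖T v‖ ^ 2 :=
        (T.continuous_of_finiteDimensional.norm).pow 2
      exact (hc.tendsto δh).comp hδt
    have h3 : Tendsto (fun k : ℕ => 2 * (1/(k+1:ℝ))) atTop (𝓝 0) := by
      simpa using tendsto_one_div_add_atTop_nhds_zero_nat.const_mul (2:ℝ)
    have h4 : ‖T δh‖ ^ 2 ≤ 0 := le_of_tendsto_of_tendsto h2 h3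
      (Filter.Eventually.of_forall h1)
    have h5 : ‖T δh‖ = 0 := by nlinarith [norm_nonneg (T δh), sq_nonneg ‖T δh‖]
    rwa [norm_eq_zero] at h5
  have hxcoord : ∀ k i, x k i = u k i + d k * δ k i := by
    intro k i
    have := congrArg (fun v : EuclideanSpace ℝ (Fin n) => v i) (hrecon k)
    simpa [PiLp.add_apply, PiLp.smul_apply, smul_eq_mul] using this
  have htermlt : ∀ k i, lam * |x k i| + g i * x k i < (1/(k+1:ℝ)) * (d k) ^ 2 := by
    intro k i
    have h2 := hxlt k
    have h5 : lam * |x k i| + g i * x k i ≤ ∑ j, (lam * |x k j| + g j * x k j) :=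
      Finset.single_le_sum (fun j _ => hterm j _) (Finset.mem_univ i)
    have h6 : (0:ℝ) ≤ (1/2) * ‖T (x k) - ybar‖ ^ 2 := by positivity
    have : Metric.infDist (x k) S = d k := rfl
    rw [this] at h2
    simp only [hGdef] at h2
    linarith
  have hkey : ∀ i : Fin n, ∀ᶠ k in atTop,
      lam * |u (ρ k) i + (d (ρ k)/3) * δh i| + g i * (u (ρ k) i + (d (ρ k)/3) * δh i) = 0 := by
    intro i
    obtain ⟨hA, hB⟩ := abs_le.mp (hg i)
    rcases eq_or_lt_of_le hA with hA' | hA'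
    · -- case g i = -lam
      have hu_nn : ∀ k, 0 ≤ u k i := by
        intro k
        have h1 := hu_term k i
        rw [← hA'] at h1
        have h2 : |u k i| = u k i := by nlinarith
        linarith [abs_nonneg (u k i)]
      have hzero : ∀ s : ℝ, 0 ≤ s → lam * |s| + g i * s = 0 := by
        intro s hs
        rw [← hA', abs_of_nonneg hs]; ring
      rcases le_or_gt 0 (δh i) with hδpos | hδneg
      · exact Filter.Eventually.of_forall fun k => hzero _
          (add_nonneg (hu_nn _) (mul_nonneg (div_nonneg (hd_nonneg _) (by norm_num)) hδpos))
      · have hxlow : ∀ k : ℕ, -((1/(k+1:ℝ)) * d k ^ 2) ≤ 2 * lam * x k i := by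
          intro k
          have h1 := htermlt k i
          rw [← hA'] at h1
          have h2 : -(x k i) ≤ |x k i| := neg_le_abs _
          have h3 := mul_le_mul_of_nonneg_left h2 hlam.le
          nlinarith
        have ev1 : ∀ᶠ k in atTop, δ (ρ k) i ≤ δh i / 2 :=
          (hδcoord i).eventually_le_const (by linarith)
        have ev2 : ∀ᶠ k : ℕ in atTop, Db * (1/(k+1:ℝ)) ≤ lam * (-(δh i)) / 3 := by
          have hlim : Tendsto (fun k : ℕ => Db * (1/(k+1:ℝ))) atTop (𝓝 0) := by
            simpa using tendsto_one_div_add_atTop_nhds_zero_nat.const_mul Db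
          exact hlim.eventually_le_const (div_pos (mul_pos hlam (by linarith)) (by norm_num))
        filter_upwards [ev1, ev2] with k h1 h2
        apply hzero
        have e1 : -((1/(ρ k+1:ℝ)) * d (ρ k) ^ 2) ≤ 2 * lam * x (ρ k) i := hxlow (ρ k)
        rw [hxcoord (ρ k) i] at e1
        have e3 : d (ρ k) * (1/(ρ k+1:ℝ)) ≤ lam * (-(δh i)) / 3 := by
          calc d (ρ k) * (1/(ρ k+1:ℝ)) ≤ Db * (1/(k+1:ℝ)) :=
                mul_le_mul (hdDb _) (hfrac k) (by positivity) hDb0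
            _ ≤ lam * (-(δh i)) / 3 := h2
        have e4 : 2*lam*d (ρ k)*δ (ρ k) i ≤ 2*lam*d (ρ k)*(δh i / 2) :=
          mul_le_mul_of_nonneg_left h1 (by nlinarith [hd_nonneg (ρ k)])
        have e5 : d (ρ k) ^2 * (1/(ρ k+1:ℝ)) ≤ d (ρ k) * (lam * (-(δh i)) / 3) := by
          calc d (ρ k) ^2 * (1/(ρ k+1:ℝ)) = d (ρ k) * (d (ρ k) * (1/(ρ k+1:ℝ))) := by ring
            _ ≤ d (ρ k) * (lam * (-(δh i)) / 3) :=
                mul_le_mul_of_nonneg_left e3 (hd_nonneg _)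
        have hfin : 0 ≤ (2*lam) * (u (ρ k) i + (d (ρ k)/3) * δh i) := by nlinarith
        nlinarith
    rcases eq_or_lt_of_le hB with hB' | hB'
    · -- case g i = lam
      have hu_np : ∀ k, u k i ≤ 0 := by
        intro k
        have h1 := hu_term k i
        rw [hB'] at h1
        have h2 : |u k i| = -(u k i) := by nlinarith
        linarith [abs_nonneg (u k i)]
      have hzero : ∀ s : ℝ, s ≤ 0 → lam * |s| + g i * s = 0 := by
        intro s hs
        rw [hB', abs_of_nonpos hs]; ring
      rcases le_or_gt (δh i) 0 with hδneg | hδpos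
      · refine Filter.Eventually.of_forall fun k => hzero _ ?_
        have := mul_nonpos_of_nonneg_of_nonpos
          (div_nonneg (hd_nonneg (ρ k)) (by norm_num : (0:ℝ) ≤ 3)) hδneg
        have := hu_np (ρ k)
        linarith
      · have hxhigh : ∀ k : ℕ, 2 * lam * x k i ≤ (1/(k+1:ℝ)) * d k ^ 2 := by
          intro k
          have h1 := htermlt k i
          rw [hB'] at h1
          have h2 : x k i ≤ |x k i| := le_abs_self _
          have h3 := mul_le_mul_of_nonneg_left h2 hlam.le
          nlinarith
        have ev1 : ∀ᶠ k in atTop, δh i / 2 ≤ δ (ρ k) i :=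
          (hδcoord i).eventually_const_le (by linarith)
        have ev2 : ∀ᶠ k : ℕ in atTop, Db * (1/(k+1:ℝ)) ≤ lam * (δh i) / 3 := by
          have hlim : Tendsto (fun k : ℕ => Db * (1/(k+1:ℝ))) atTop (𝓝 0) := by
            simpa using tendsto_one_div_add_atTop_nhds_zero_nat.const_mul Db
          exact hlim.eventually_le_const (div_pos (mul_pos hlam hδpos) (by norm_num))
        filter_upwards [ev1, ev2] with k h1 h2
        apply hzero
        have e1 : 2 * lam * x (ρ k) i ≤ (1/(ρ k+1:ℝ)) * d (ρ k) ^ 2 := hxhigh (ρ k)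
        rw [hxcoord (ρ k) i] at e1
        have e3 : d (ρ k) * (1/(ρ k+1:ℝ)) ≤ lam * (δh i) / 3 := by
          calc d (ρ k) * (1/(ρ k+1:ℝ)) ≤ Db * (1/(k+1:ℝ)) :=
                mul_le_mul (hdDb _) (hfrac k) (by positivity) hDb0
            _ ≤ lam * (δh i) / 3 := h2
        have e4 : 2*lam*d (ρ k)*(δh i / 2) ≤ 2*lam*d (ρ k)*δ (ρ k) i :=
          mul_le_mul_of_nonneg_left h1 (by nlinarith [hd_nonneg (ρ k)])
        have e5 : d (ρ k) ^2 * (1/(ρ k+1:ℝ)) ≤ d (ρ k) * (lam * (δh i) / 3) := by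
          calc d (ρ k) ^2 * (1/(ρ k+1:ℝ)) = d (ρ k) * (d (ρ k) * (1/(ρ k+1:ℝ))) := by ring
            _ ≤ d (ρ k) * (lam * (δh i) / 3) :=
                mul_le_mul_of_nonneg_left e3 (hd_nonneg _)
        have hfin : (2*lam) * (u (ρ k) i + (d (ρ k)/3) * δh i) ≤ 0 := by nlinarith
        nlinarith
    · -- case |g i| < lam
      have hglt : |g i| < lam := abs_lt.mpr ⟨by linarith, hB'⟩
      have hc : 0 < lam - |g i| := by linarith
      have huz : ∀ k, u k i = 0 := by
        intro k
        have h1 := hu_term k i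
        have h2 : -(g i * u k i) ≤ |g i| * |u k i| := by
          rw [← abs_mul]; exact neg_le_abs _
        have h3 : |u k i| ≤ 0 := by nlinarith [abs_nonneg (u k i)]
        exact abs_eq_zero.mp (le_antisymm h3 (abs_nonneg _))
      have hδz : δh i = 0 := by
        have hb : ∀ k, |δ (ρ k) i| ≤ (Db / (lam - |g i|)) * (1/(k+1:ℝ)) := by
          intro k
          have h1 := htermlt (ρ k) i
          have h2 : x (ρ k) i = d (ρ k) * δ (ρ k) i := by
            rw [hxcoord (ρ k) i, huz (ρ k)]; ring
          rw [h2] at h1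
          have hdk := hd_pos (ρ k)
          have hl1 : |d (ρ k) * δ (ρ k) i| = d (ρ k) * |δ (ρ k) i| := by
            rw [abs_mul, abs_of_pos hdk]
          rw [hl1] at h1
          have hl2 : -(g i * (d (ρ k) * δ (ρ k) i)) ≤ |g i| * (d (ρ k) * |δ (ρ k) i|) := by
            rw [← hl1, ← abs_mul]; exact neg_le_abs _
          have hl3 : d (ρ k) * (1/(ρ k + 1:ℝ)) ≤ Db * (1/(k+1:ℝ)) :=
            mul_le_mul (hdDb _) (hfrac k) (by positivity) hDb0
          have hl4 : d (ρ k) * (d (ρ k) * (1/(ρ k + 1:ℝ))) ≤ d (ρ k) * (Db * (1/(k+1:ℝ))) :=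
            mul_le_mul_of_nonneg_left hl3 (hd_nonneg _)
          have h3 : (lam - |g i|) * |δ (ρ k) i| * d (ρ k) < (Db * (1/(k+1:ℝ))) * d (ρ k) := by
            nlinarith
          have h4 : (lam - |g i|) * |δ (ρ k) i| < Db * (1/(k+1:ℝ)) :=
            lt_of_mul_lt_mul_right h3 hdk.le
          rw [div_mul_eq_mul_div, le_div_iff₀ hc]
          nlinarith
        have htend : Tendsto (fun k => |δ (ρ k) i|) atTop (𝓝 (|δh i|)) := (hδcoord i).abs
        have hbl : Tendsto (fun k : ℕ => (Db / (lam - |g i|)) * (1/(k+1:ℝ))) atTop (𝓝 0) := by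
          simpa using tendsto_one_div_add_atTop_nhds_zero_nat.const_mul (Db / (lam - |g i|))
        have hle : |δh i| ≤ 0 := le_of_tendsto_of_tendsto htend hbl
          (Filter.Eventually.of_forall hb)
        exact abs_eq_zero.mp (le_antisymm hle (abs_nonneg _))
      exact Filter.Eventually.of_forall fun k => by rw [huz (ρ k), hδz]; simp
  have hall : ∀ᶠ k in atTop, ∀ i : Fin n,
      lam * |u (ρ k) i + (d (ρ k)/3) * δh i| + g i * (u (ρ k) i + (d (ρ k)/3) * δh i) = 0 :=
    eventually_all.mpr hkey
  have hnear : ∀ᶠ k in atTop, ‖δ (ρ k) - (3:ℝ)⁻¹ • δh‖ < 5/6 := by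
    have h1 : Tendsto (fun k => ‖δ (ρ k) - (3:ℝ)⁻¹ • δh‖) atTop
        (𝓝 (‖δh - (3:ℝ)⁻¹ • δh‖)) := (hδt.sub tendsto_const_nhds).norm
    have h2 : ‖δh - (3:ℝ)⁻¹ • δh‖ = 2/3 := by
      have h3 : δh - (3:ℝ)⁻¹ • δh = (2/3 : ℝ) • δh := by
        have h4 : (2/3 : ℝ) = 1 - 3⁻¹ := by norm_num
        rw [h4, sub_smul, one_smul]
      rw [h3, norm_smul, hδh1]
      norm_num
    rw [h2] at h1
    exact h1.eventually_lt_const (by norm_num)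
  obtain ⟨k, hk1, hk2⟩ := (hall.and hnear).exists
  set z := u (ρ k) + (d (ρ k)/3) • δh with hz
  have hzS : z ∈ S := by
    rw [hS]
    constructor
    · rw [hz, map_add, _root_.map_smul, hu_T, hTδh, smul_zero, add_zero]
    · intro i
      have h3 : z i = u (ρ k) i + (d (ρ k)/3) * δh i := by
        simp [hz, PiLp.add_apply, PiLp.smul_apply, smul_eq_mul]
      rw [h3]; exact hk1 i
  have h4 : d (ρ k) ≤ dist (x (ρ k)) z := by
    rw [show d (ρ k) = Metric.infDist (x (ρ k)) S from rfl]
    exact Metric.infDist_le_dist_of_mem hzS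
  have h5 : x (ρ k) - z = d (ρ k) • (δ (ρ k) - (3:ℝ)⁻¹ • δh) := by
    rw [hz, hrecon (ρ k)]
    module
  have h6 : dist (x (ρ k)) z < d (ρ k) := by
    rw [dist_eq_norm, h5, norm_smul, Real.norm_eq_abs, abs_of_pos (hd_pos (ρ k))]
    calc d (ρ k) * ‖δ (ρ k) - (3:ℝ)⁻¹ • δh‖ < d (ρ k) * 1 := by
          apply mul_lt_mul_of_pos_left _ (hd_pos (ρ k))
          linarith
      _ = d (ρ k) := mul_one _
  linarith


/-- Local error bound for the LASSO problem
`min (1/2)‖Ax − b‖² + λ‖x‖₁`.  Here `p z = prox_{λ‖·‖₁}(z − Aᵀ(Az − b))`. -/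
theorem error_bound_lasso {n m : ℕ}
    (A : Matrix (Fin m) (Fin n) ℝ) (b : EuclideanSpace ℝ (Fin m))
    (lam : ℝ) (hlam : 0 < lam)
    (F : EuclideanSpace ℝ (Fin n) → ℝ)
    (hF : ∀ x, F x = (1 / 2) * ‖Matrix.toEuclideanLin A x - b‖ ^ 2 + lam * ∑ i, |x i|)
    (p : EuclideanSpace ℝ (Fin n) → EuclideanSpace ℝ (Fin n))
    (hp : ∀ z, IsProx (fun y => lam * ∑ i, |y i|)
      (z - Matrix.toEuclideanLin Aᵀ (Matrix.toEuclideanLin A z - b)) (p z))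
    (Xstar : Set (EuclideanSpace ℝ (Fin n)))
    (hXstar : Xstar = {y | ∀ z, F y ≤ F z}) :
    ∀ ν : ℝ, sInf (Set.range F) ≤ ν → ∃ δ > (0 : ℝ), ∃ τ > (0 : ℝ),
      ∀ x : EuclideanSpace ℝ (Fin n), F x ≤ ν → ‖x - p x‖ ≤ δ →
        Metric.infDist x (closure Xstar) ≤ τ * ‖x - p x‖ := by
  intro ν hν
  classical
  set T : EuclideanSpace ℝ (Fin n) →ₗ[ℝ] EuclideanSpace ℝ (Fin m) :=
    Matrix.toEuclideanLin A with hTdef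
  set T' : EuclideanSpace ℝ (Fin m) →ₗ[ℝ] EuclideanSpace ℝ (Fin n) :=
    Matrix.toEuclideanLin Aᵀ with hT'def
  have hadj : ∀ (uu : EuclideanSpace ℝ (Fin m)) (vv : EuclideanSpace ℝ (Fin n)),
      ⟪T' uu, vv⟫ = ⟪uu, T vv⟫ := adjoint_inner A
  have hFcont : Continuous F := by
    have hFe : F = fun x => (1/2) * ‖T x - b‖^2 + lam * ∑ i, |x i| := funext hF
    rw [hFe]
    exact (continuous_const.mul
        (((T.continuous_of_finiteDimensional.sub continuous_const).norm).pow 2)).add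
      (continuous_const.mul (continuous_finset_sum _ fun i _ =>
        (EuclideanSpace.proj (𝕜 := ℝ) i).continuous.abs))
  have hFcoer : ∀ x, lam * ‖x‖ ≤ F x := by
    intro x
    rw [hF x]
    have h1 : ‖x‖ ≤ ∑ i, |x i| := norm_le_sum_abs x
    nlinarith [sq_nonneg ‖T x - b‖]
  have hF0 : 0 ≤ F 0 := by
    have := hFcoer 0
    simpa using this
  -- existence of a global minimizer
  obtain ⟨xb, hxbball, hxbmin'⟩ :=
    (isCompact_closedBall (0 : EuclideanSpace ℝ (Fin n)) (F 0 / lam)).exists_isMinOn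
      ⟨0, by simp [mem_closedBall_zero_iff]; positivity⟩ hFcont.continuousOn
  have hxbmin : ∀ y ∈ Metric.closedBall (0 : EuclideanSpace ℝ (Fin n)) (F 0 / lam),
      F xb ≤ F y := fun y hy => hxbmin' hy
  have hxbglobal : ∀ z, F xb ≤ F z := by
    intro z
    rcases le_or_gt ‖z‖ (F 0 / lam) with hz | hz
    · exact hxbmin z (mem_closedBall_zero_iff.mpr hz)
    · have h1 : F 0 < ‖z‖ * lam := (div_lt_iff₀ hlam).mp hz
      have h2 := hFcoer z
      have h3 := hxbmin 0 (by simp [mem_closedBall_zero_iff]; positivity)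
      nlinarith
  have hxbX : xb ∈ Xstar := by rw [hXstar]; exact hxbglobal
  have hXclosed : IsClosed Xstar := by
    rw [hXstar]
    have he : {y | ∀ z, F y ≤ F z} = ⋂ z, {y | F y ≤ F z} := by
      ext y; simp [Set.mem_iInter]
    rw [he]
    exact isClosed_iInter fun z => isClosed_le hFcont continuous_const
  have hXne : Xstar.Nonempty := ⟨xb, hxbX⟩
  set ybar := T xb with hybar
  set g := T' (ybar - b) with hgdef
  have htermnn : ∀ (i : Fin n) (s : ℝ), |g i| ≤ lam → 0 ≤ lam * |s| + g i * s := by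
    intro i s hgi
    have h1 : |g i| * |s| ≤ lam * |s| := mul_le_mul_of_nonneg_right hgi (abs_nonneg s)
    have h2 : -(g i * s) ≤ |g i * s| := neg_le_abs _
    rw [abs_mul] at h2
    linarith
  -- key decomposition identity
  have key_id : ∀ x, F x = F xb + ((1/2) * ‖T x - ybar‖^2 +
      (∑ i, (lam * |x i| + g i * x i)) - (∑ i, (lam * |xb i| + g i * xb i))) := by
    intro x
    rw [hF x, hF xb]
    have h1 : T x - b = (T x - ybar) + (ybar - b) := by abel
    have h2 : ‖T x - b‖^2 = ‖T x - ybar‖^2 + 2*⟪T x - ybar, ybar - b⟫ + ‖ybar - b‖^2 := by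
      rw [h1, norm_add_sq_real]
    have h3 : ⟪T x - ybar, ybar - b⟫ = (∑ i, g i * x i) - (∑ i, g i * xb i) := by
      have e1 : ⟪T x - ybar, ybar - b⟫ = ⟪ybar - b, T (x - xb)⟫ := by
        rw [real_inner_comm, hybar, ← map_sub]
      have e2 : ⟪ybar - b, T (x - xb)⟫ = ⟪g, x - xb⟫ := (hadj (ybar - b) (x - xb)).symm
      have e3 : ⟪g, x - xb⟫ = ∑ i, g i * (x - xb) i := euclid_inner_eq g (x - xb)
      have e4 : ∑ i, g i * (x - xb) i = (∑ i, g i * x i) - (∑ i, g i * xb i) := by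
        rw [← Finset.sum_sub_distrib]
        refine Finset.sum_congr rfl fun i _ => ?_
        have : (x - xb) i = x i - xb i := rfl
        rw [this]; ring
      rw [e1, e2, e3, e4]
    have h4 : (∑ i, (lam * |x i| + g i * x i))
        = lam * (∑ i, |x i|) + ∑ i, g i * x i := by
      rw [Finset.sum_add_distrib, Finset.mul_sum]
    have h5 : (∑ i, (lam * |xb i| + g i * xb i))
        = lam * (∑ i, |xb i|) + ∑ i, g i * xb i := by
      rw [Finset.sum_add_distrib, Finset.mul_sum]
    rw [hybar] at h2 h3 ⊢
    linarith [h2, h3, h4, h5]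
  -- single-coordinate directional inequality
  have hsingle : ∀ (i : Fin n) (t : ℝ),
      EuclideanSpace.single i t = t • EuclideanSpace.single i (1:ℝ) := by
    intro i t
    ext j
    simp [EuclideanSpace.single_apply, PiLp.smul_apply, smul_eq_mul, mul_ite]
  have hcoordF : ∀ (i : Fin n) (t : ℝ),
      0 ≤ (1/2) * ‖T (EuclideanSpace.single i (1:ℝ))‖^2 * t^2
        + (lam * |xb i + t| - lam * |xb i|) + g i * t := by
    intro i t
    have h1 := hxbglobal (xb + EuclideanSpace.single i t)
    rw [key_id (xb + EuclideanSpace.single i t)] at h1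
    have h2 : T (xb + EuclideanSpace.single i t) - ybar = t • T (EuclideanSpace.single i (1:ℝ)) := by
      rw [map_add, hsingle i t, _root_.map_smul, hybar]
      abel
    have h3 : ‖T (xb + EuclideanSpace.single i t) - ybar‖^2
        = t^2 * ‖T (EuclideanSpace.single i (1:ℝ))‖^2 := by
      rw [h2, norm_smul, Real.norm_eq_abs, mul_pow, sq_abs]
    have h4 : ∀ j : Fin n, (xb + EuclideanSpace.single i t) j
        = xb j + (if j = i then t else 0) := by
      intro j
      simp [EuclideanSpace.single_apply]
    have h5 : (∑ j, (lam * |(xb + EuclideanSpace.single i t) j|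
          + g j * (xb + EuclideanSpace.single i t) j))
        - (∑ j, (lam * |xb j| + g j * xb j))
        = lam * |xb i + t| - lam * |xb i| + g i * t := by
      rw [← Finset.sum_sub_distrib]
      rw [Finset.sum_eq_single i]
      · rw [h4 i]
        simp only [eq_self_iff_true, if_true]
        ring
      · intro j _ hj
        rw [h4 j, if_neg hj]
        ring
      · intro h; exact absurd (Finset.mem_univ i) h
    rw [h3] at h1
    linarith [h1, h5]
  -- |g i| ≤ lam
  have hgle : ∀ i, |g i| ≤ lam := by
    intro i
    set a := (1/2) * ‖T (EuclideanSpace.single i (1:ℝ))‖^2 with hadef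
    have ha : 0 ≤ a := by positivity
    rw [abs_le]
    constructor
    · -- -lam ≤ g i
      have h1 : ∀ t : ℝ, 0 < t → t ≤ 1 → 0 ≤ (lam + g i) + t * a := by
        intro t ht0 ht1
        have h2 := hcoordF i t
        have h3 : |xb i + t| - |xb i| ≤ t := by
          have := abs_add_le (xb i) t
          have := abs_of_pos ht0
          linarith [abs_add_le (xb i) t, abs_of_pos ht0]
        have h4 : lam * (|xb i + t| - |xb i|) ≤ lam * t :=
          mul_le_mul_of_nonneg_left h3 hlam.le
        have h5 : 0 ≤ a * t^2 + lam * t + g i * t := by nlinarith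
        have h6 : 0 ≤ t * ((lam + g i) + t * a) := by nlinarith
        exact nonneg_of_mul_nonneg_right h6 ht0
      linarith [nonneg_of_forall_small _ _ h1]
    · -- g i ≤ lam
      have h1 : ∀ t : ℝ, 0 < t → t ≤ 1 → 0 ≤ (lam - g i) + t * a := by
        intro t ht0 ht1
        have h2 := hcoordF i (-t)
        have h3 : |xb i + -t| - |xb i| ≤ t := by
          have := abs_add_le (xb i) (-t)
          have : |(-t : ℝ)| = t := by rw [abs_neg, abs_of_pos ht0]
          linarith [abs_add_le (xb i) (-t)]
        have h4 : lam * (|xb i + -t| - |xb i|) ≤ lam * t :=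
          mul_le_mul_of_nonneg_left h3 hlam.le
        have h5 : 0 ≤ a * t^2 + lam * t - g i * t := by nlinarith
        have h6 : 0 ≤ t * ((lam - g i) + t * a) := by nlinarith
        exact nonneg_of_mul_nonneg_right h6 ht0
      linarith [nonneg_of_forall_small _ _ h1]
  -- complementarity at xb
  have hterm0 : ∀ i, lam * |xb i| + g i * xb i = 0 := by
    intro i
    set a := (1/2) * ‖T (EuclideanSpace.single i (1:ℝ))‖^2 with hadef
    have ha : 0 ≤ a := by positivity
    have hle : lam * |xb i| + g i * xb i ≤ 0 := by
      have key2 : ∀ ε : ℝ, 0 < ε → ε ≤ 1 →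
          0 ≤ -(lam * |xb i| + g i * xb i) + ε * (a * (xb i)^2) := by
        intro ε h1 h2
        have c := hcoordF i (-(ε * xb i))
        have h3 : |xb i + -(ε * xb i)| = (1-ε) * |xb i| := by
          rw [show xb i + -(ε * xb i) = (1-ε) * xb i by ring, abs_mul,
            abs_of_nonneg (by linarith : (0:ℝ) ≤ 1 - ε)]
        rw [h3] at c
        have c' : 0 ≤ ε * (-(lam * |xb i| + g i * xb i) + ε * (a * (xb i)^2)) := by
          nlinarith
        exact nonneg_of_mul_nonneg_right c' h1
      linarith [nonneg_of_forall_small _ _ key2]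
    linarith [htermnn i (xb i) (hgle i)]
  have hsum0 : (∑ i, (lam * |xb i| + g i * xb i)) = 0 :=
    Finset.sum_eq_zero fun i _ => hterm0 i
  have hid : ∀ v, F v - F xb
      = (1/2) * ‖T v - ybar‖^2 + ∑ i, (lam * |v i| + g i * v i) := by
    intro v
    rw [key_id v, hsum0]
    ring
  -- characterization of the solution set
  have hSiff : ∀ x, x ∈ Xstar ↔ (T x = ybar ∧ ∀ i, lam * |x i| + g i * x i = 0) := by
    intro x
    constructor
    · intro hx
      have h1 : F x ≤ F xb := by rw [hXstar] at hx; exact hx xb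
      have h2 : F xb ≤ F x := hxbglobal x
      have h3 : (1/2) * ‖T x - ybar‖^2 + ∑ i, (lam * |x i| + g i * x i) = 0 := by
        have := hid x; linarith
      have h4 : (0:ℝ) ≤ ∑ i, (lam * |x i| + g i * x i) :=
        Finset.sum_nonneg fun i _ => htermnn i _ (hgle i)
      have h5 : (0:ℝ) ≤ (1/2) * ‖T x - ybar‖^2 := by positivity
      constructor
      · have h6 : ‖T x - ybar‖^2 = 0 := by linarith
        have h7 : ‖T x - ybar‖ = 0 := by
          nlinarith [norm_nonneg (T x - ybar)]
        rwa [norm_eq_zero, sub_eq_zero] at h7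
      · intro i
        exact (Finset.sum_eq_zero_iff_of_nonneg
          (fun i _ => htermnn i _ (hgle i))).mp (by linarith) i (Finset.mem_univ i)
    · rintro ⟨h1, h2⟩
      rw [hXstar]
      intro z
      have h3 : F x - F xb = 0 := by
        rw [hid x, h1]
        simp [Finset.sum_eq_zero fun i _ => h2 i]
      have := hxbglobal z
      linarith
  -- quadratic growth on a ball
  obtain ⟨μ, hμpos, hQG⟩ := quad_growth T ybar lam hlam g hgle Xstar hXne hXclosed hSiff
    (ν / lam + 1)
  -- Lipschitz constant for T' ∘ T
  obtain ⟨L, hLnn, hLip⟩ : ∃ L : ℝ, 0 ≤ L ∧ ∀ v, ‖T' (T v)‖ ≤ L * ‖v‖ := by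
    refine ⟨‖LinearMap.toContinuousLinearMap (T'.comp T)‖, norm_nonneg _, fun v => ?_⟩
    have h1 := (LinearMap.toContinuousLinearMap (T'.comp T)).le_opNorm v
    simpa only [LinearMap.coe_toContinuousLinearMap', LinearMap.comp_apply] using h1
  refine ⟨1, one_pos, 1 + (1 + L)/μ, ?_, ?_⟩
  · have h1 : 0 ≤ (1 + L)/μ := div_nonneg (by linarith) hμpos.le
    linarith
  intro x hFx hres
  set r := x - p x with hrdef
  -- p x lies in the ball
  have hxnorm : ‖x‖ ≤ ν / lam := by
    have h1 := hFcoer x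
    rw [le_div_iff₀ hlam]
    nlinarith
  have hpxball : p x ∈ Metric.closedBall (0 : EuclideanSpace ℝ (Fin n)) (ν / lam + 1) := by
    rw [mem_closedBall_zero_iff]
    have h1 : ‖p x‖ ≤ ‖x‖ + ‖x - p x‖ := by
      have h2 : p x = x - (x - p x) := by abel
      calc ‖p x‖ = ‖x - (x - p x)‖ := by rw [← h2]
        _ ≤ ‖x‖ + ‖x - p x‖ := norm_sub_le _ _
    linarith
  -- subgradient inequality from the prox property
  have hsub : ∀ y, lam * (∑ i, |p x i|) + ⟪(x - T' (T x - b)) - p x, y - p x⟫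
      ≤ lam * (∑ i, |y i|) :=
    prox_subgrad lam hlam.le (x - T' (T x - b)) (p x) (hp x)
  -- nearest point in Xstar to p x
  obtain ⟨z, hzX, hzd⟩ := hXclosed.exists_infDist_eq_dist hXne (p x)
  set d' := Metric.infDist (p x) Xstar with hd'def
  have hd'nn : 0 ≤ d' := Metric.infDist_nonneg
  have hFz_eq : F z = F xb := le_antisymm ((hXstar ▸ hzX) xb) (hxbglobal z)
  -- descent inequality
  have hkey3 : F xb ≥ F (p x) + ⟪r - T' (T r), z - p x⟫ := by
    have h1 : (1/2) * ‖T z - b‖^2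
        ≥ (1/2) * ‖T (p x) - b‖^2 + ⟪T' (T (p x) - b), z - p x⟫ := by
      have he : T z - b = (T (p x) - b) + T (z - p x) := by rw [map_sub]; abel
      have h2 : ‖T z - b‖^2 = ‖T (p x) - b‖^2 + 2*⟪T (p x) - b, T (z - p x)⟫
          + ‖T (z - p x)‖^2 := by rw [he, norm_add_sq_real]
      have h3 : ⟪T' (T (p x) - b), z - p x⟫ = ⟪T (p x) - b, T (z - p x)⟫ :=
        hadj (T (p x) - b) (z - p x)
      nlinarith [sq_nonneg ‖T (z - p x)‖]
    have h4 := hsub z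
    have h6 : T' (T (p x) - b) + ((x - T' (T x - b)) - p x) = r - T' (T r) := by
      have e1 : T' (T (p x) - b) - T' (T x - b) = - T' (T r) := by
        rw [← map_sub T']
        have e2 : (T (p x) - b) - (T x - b) = T (p x) - T x := by abel
        rw [e2, ← map_sub T]
        have e3 : p x - x = -r := by rw [hrdef]; abel
        rw [e3, map_neg, map_neg]
      have e4 : T' (T (p x) - b) + ((x - T' (T x - b)) - p x)
          = (T' (T (p x) - b) - T' (T x - b)) + (x - p x) := by abel
      rw [e4, e1, hrdef]
      abel
    have h7 : ⟪T' (T (p x) - b), z - p x⟫ + ⟪(x - T' (T x - b)) - p x, z - p x⟫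
        = ⟪r - T' (T r), z - p x⟫ := by
      rw [← inner_add_left, h6]
    have h8 : F z ≥ F (p x) + ⟪r - T' (T r), z - p x⟫ := by
      rw [hF z, hF (p x)]
      linarith
    rw [hFz_eq] at h8
    exact h8
  have hnormbound : ‖r - T' (T r)‖ ≤ (1 + L) * ‖r‖ := by
    have h1 := hLip r
    have h2 := norm_sub_le r (T' (T r))
    have h3 : L * ‖r‖ + ‖r‖ = (1 + L) * ‖r‖ := by ring
    linarith
  have hinner_ge : ⟪r - T' (T r), z - p x⟫ ≥ -((1 + L) * ‖r‖ * d') := by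
    have h1 : |⟪r - T' (T r), z - p x⟫| ≤ ‖r - T' (T r)‖ * ‖z - p x‖ :=
      abs_real_inner_le_norm _ _
    have h2 : ‖z - p x‖ = d' := by
      rw [← dist_eq_norm, dist_comm, ← hzd]
    rw [h2] at h1
    have h3 : ‖r - T' (T r)‖ * d' ≤ ((1 + L) * ‖r‖) * d' :=
      mul_le_mul_of_nonneg_right hnormbound hd'nn
    have h4 := neg_abs_le ⟪r - T' (T r), z - p x⟫
    linarith
  -- quadratic growth at p x
  have hup : μ * d'^2 ≤ F (p x) - F xb := by
    have h1 := hQG (p x) hpxball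
    rw [hid (p x)]
    exact h1
  have hdown : F (p x) - F xb ≤ (1 + L) * ‖r‖ * d' := by linarith [hkey3, hinner_ge]
  have hd'le : d' ≤ ((1 + L)/μ) * ‖r‖ := by
    rcases eq_or_lt_of_le hd'nn with h0 | h0
    · rw [← h0]
      have h1 : 0 ≤ ‖r‖ := norm_nonneg r
      have h2 : 0 ≤ (1 + L)/μ := div_nonneg (by linarith) hμpos.le
      exact mul_nonneg h2 h1
    · have h2 : μ * d'^2 ≤ ((1 + L) * ‖r‖) * d' := by linarith [hup, hdown]
      have h3 : (μ * d') * d' ≤ ((1 + L) * ‖r‖) * d' := by linarith [h2]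
      have h4 : μ * d' ≤ (1 + L) * ‖r‖ := le_of_mul_le_mul_right h3 h0
      rw [div_mul_eq_mul_div, le_div_iff₀ hμpos]
      linarith [h4]
  -- conclusion
  rw [hXclosed.closure_eq]
  have h1 : Metric.infDist x Xstar ≤ dist x z := Metric.infDist_le_dist_of_mem hzX
  have h2 : dist x z ≤ dist x (p x) + dist (p x) z := dist_triangle _ _ _
  have h3 : dist x (p x) = ‖r‖ := by rw [dist_eq_norm, hrdef]
  have h4 : dist (p x) z = d' := hzd.symm
  calc Metric.infDist x Xstar ≤ ‖r‖ + d' := by linarith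
    _ ≤ ‖r‖ + ((1 + L)/μ) * ‖r‖ := by linarith
    _ = (1 + (1 + L)/μ) * ‖x - p x‖ := by rw [hrdef]; ring
end

section
/- Let 𝒥 be a partition of {1,…,n} with weights w_J > 0, A an m×n real matrix, b ∈ ℝᵐ, and consider the group LASSO problem min_{x∈ℝⁿ} F(x) = (1/2)‖Ax − b‖² + Σ_{J∈𝒥} w_J‖x_J‖₂. Then the local error bound holds: for every ν ≥ inf F there exist δ > 0 and τ > 0 such that dist(x, closure(X*)) ≤ τ·‖x − prox_{f₁}(x − Aᵀ(Ax − b))‖ for all x ∈ ℝⁿ with F(x) ≤ ν and ‖x − prox_{f₁}(x − Aᵀ(Ax − b))‖ ≤ δ, where f₁(x) = Σ_{J∈𝒥} w_J‖x_J‖₂ and X* is the set of minimizers of F. -/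
open Set Finset Matrix

open Metric Filter

section Hoffman

set_option linter.unusedSectionVars false
set_option maxHeartbeats 1000000

variable {E : Type*} [NormedAddCommGroup E] [InnerProductSpace ℝ E] [FiniteDimensional ℝ E]
variable {G : Type*} [NormedAddCommGroup G] [NormedSpace ℝ G]
variable {ι : Type*} [Fintype ι] [DecidableEq ι]

lemma le_infDist' {α : Type*} [PseudoMetricSpace α] {s : Set α} (hs : s.Nonempty) {x : α} {b : ℝ}
    (h : ∀ y ∈ s, b ≤ dist x y) : b ≤ Metric.infDist x s := by
  by_contra hlt
  push_neg at hlt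
  obtain ⟨y, hy, hd⟩ := (Metric.infDist_lt_iff hs).1 hlt
  exact absurd hd (not_lt.2 (h y hy))

lemma max_zero_mul_of_nonneg (σ a : ℝ) (hσ : 0 ≤ σ) : max 0 (σ * a) = σ * max 0 a := by
  rcases le_total a 0 with h | h
  · rw [max_eq_left (mul_nonpos_of_nonneg_of_nonpos hσ h), max_eq_left h, mul_zero]
  · rw [max_eq_right (mul_nonneg hσ h), max_eq_right h]

/-- residual of the linear system -/
noncomputable def hres (M : E →ₗ[ℝ] G) (c : ι → E →ₗ[ℝ] ℝ) (S : Finset ι) (y : G) (x : E) : ℝ :=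
  ‖M x - y‖ + ∑ i ∈ S, max 0 (-(c i x))

/-- solution set of the linear system -/
def hset (M : E →ₗ[ℝ] G) (c : ι → E →ₗ[ℝ] ℝ) (S : Finset ι) (y : G) : Set E :=
  {x | M x = y ∧ ∀ i ∈ S, 0 ≤ c i x}

variable (M : E →ₗ[ℝ] G) (c : ι → E →ₗ[ℝ] ℝ)

lemma sum_res_nonneg (S : Finset ι) (x : E) : (0:ℝ) ≤ ∑ i ∈ S, max 0 (-(c i x)) :=
  Finset.sum_nonneg fun i _ => le_max_left _ _

lemma hres_nonneg (S : Finset ι) (y : G) (x : E) : 0 ≤ hres M c S y x :=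
  add_nonneg (norm_nonneg _) (sum_res_nonneg c S x)

lemma hres_continuous (S : Finset ι) (y : G) : Continuous (hres M c S y) := by
  refine Continuous.add ?_ ?_
  · exact (M.continuous_of_finiteDimensional.sub continuous_const).norm
  · exact continuous_finset_sum _ fun i _ =>
      (continuous_const.max ((c i).continuous_of_finiteDimensional.neg))

lemma hres_eq_zero_of_mem {S : Finset ι} {y : G} {x : E} (hx : x ∈ hset M c S y) :
    hres M c S y x = 0 := by
  obtain ⟨h1, h2⟩ := hx
  have h3 : ∀ i ∈ S, max 0 (-(c i x)) = 0 := fun i hi =>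
    max_eq_left (by simpa using h2 i hi)
  simp [hres, h1, Finset.sum_congr rfl h3]

lemma mem_of_hres_eq_zero {S : Finset ι} {y : G} {x : E} (hx : hres M c S y x = 0) :
    x ∈ hset M c S y := by
  have hs : (0:ℝ) ≤ ∑ i ∈ S, max 0 (-(c i x)) := sum_res_nonneg c S x
  have hnm : (0:ℝ) ≤ ‖M x - y‖ := norm_nonneg _
  unfold hres at hx
  have h1 : ‖M x - y‖ = 0 := by linarith
  have h2 : (∑ i ∈ S, max 0 (-(c i x))) = 0 := by linarith
  constructor
  · rwa [norm_sub_eq_zero_iff] at h1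
  · intro i hi
    have hall := (Finset.sum_eq_zero_iff_of_nonneg (fun i _ => le_max_left 0 (-(c i x)))).1 h2 i hi
    by_contra hneg
    push_neg at hneg
    have : (0:ℝ) < max 0 (-(c i x)) := lt_max_of_lt_right (by linarith)
    linarith

lemma hres_translate (S : Finset ι) (y : G) (a x : E) (ha : M a = y ∧ ∀ i ∈ S, c i a = 0) :
    hres M c S y x = hres M c S 0 (x - a) := by
  unfold hres
  congr 1
  · rw [map_sub, ha.1, sub_zero]
  · refine Finset.sum_congr rfl fun i hi => ?_
    rw [map_sub, ha.2 i hi, sub_zero]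

lemma hres_smul (S : Finset ι) (σ : ℝ) (hσ : 0 ≤ σ) (x : E) :
    hres M c S 0 (σ • x) = σ * hres M c S 0 x := by
  unfold hres
  rw [_root_.map_smul, sub_zero, sub_zero, norm_smul, Real.norm_of_nonneg hσ, mul_add]
  congr 1
  rw [Finset.mul_sum]
  refine Finset.sum_congr rfl fun i hi => ?_
  rw [_root_.map_smul, smul_eq_mul, ← mul_neg, max_zero_mul_of_nonneg σ _ hσ]

/-- distance to a set invariant under subtraction of `a` -/
lemma infDist_translate' {α : Type*} [SeminormedAddCommGroup α] {Q C : Set α} (a : α)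
    (hQC : ∀ t, t ∈ Q ↔ t - a ∈ C) (hC : C.Nonempty) (z : α) :
    Metric.infDist z Q = Metric.infDist (z - a) C := by
  have hQ : Q.Nonempty := by
    obtain ⟨v, hv⟩ := hC
    exact ⟨v + a, by rw [hQC]; simpa using hv⟩
  apply le_antisymm
  · refine le_infDist' hC fun v hv => ?_
    have hvQ : v + a ∈ Q := by rw [hQC]; simpa using hv
    calc Metric.infDist z Q ≤ dist z (v + a) := Metric.infDist_le_dist_of_mem hvQ
      _ = dist (z - a) v := by rw [dist_eq_norm, dist_eq_norm]; congr 1; abel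
  · refine le_infDist' hQ fun q hq => ?_
    calc Metric.infDist (z - a) C ≤ dist (z - a) (q - a) :=
          Metric.infDist_le_dist_of_mem ((hQC q).1 hq)
      _ = dist z q := by rw [dist_eq_norm, dist_eq_norm]; congr 1; abel

lemma infDist_smul_le {C : Set E} (hC : C.Nonempty)
    (hcone : ∀ (σ : ℝ), 0 < σ → ∀ v ∈ C, σ • v ∈ C) (σ : ℝ) (hσ : 0 < σ) (z : E) :
    Metric.infDist (σ • z) C ≤ σ * Metric.infDist z C := by
  refine le_of_forall_pos_le_add fun ε hε => ?_
  have hεσ : 0 < ε / σ := div_pos hε hσ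
  have hlt : Metric.infDist z C < Metric.infDist z C + ε / σ := by linarith
  obtain ⟨v, hv, hdv⟩ := (Metric.infDist_lt_iff hC).1 hlt
  calc Metric.infDist (σ • z) C ≤ dist (σ • z) (σ • v) :=
        Metric.infDist_le_dist_of_mem (hcone σ hσ v hv)
    _ = σ * dist z v := by rw [dist_smul₀, Real.norm_of_nonneg hσ.le]
    _ ≤ σ * (Metric.infDist z C + ε / σ) := by nlinarith
    _ = σ * Metric.infDist z C + σ * (ε / σ) := by ring
    _ = σ * Metric.infDist z C + ε := by rw [mul_comm σ (ε/σ), div_mul_cancel₀ ε hσ.ne']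

lemma infDist_smul_cone {C : Set E} (hC : C.Nonempty)
    (hcone : ∀ (σ : ℝ), 0 < σ → ∀ v ∈ C, σ • v ∈ C) (σ : ℝ) (hσ : 0 < σ) (z : E) :
    Metric.infDist (σ • z) C = σ * Metric.infDist z C := by
  apply le_antisymm (infDist_smul_le hC hcone σ hσ z)
  have h2 := infDist_smul_le hC hcone σ⁻¹ (by positivity) (σ • z)
  rw [inv_smul_smul₀ hσ.ne'] at h2
  have hσ' : (0:ℝ) < σ⁻¹ := by positivity
  calc σ * Metric.infDist z C ≤ σ * (σ⁻¹ * Metric.infDist (σ • z) C) := by nlinarith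
    _ = Metric.infDist (σ • z) C := by field_simp

theorem hoffman : ∀ S : Finset ι, ∀ y : G, (hset M c S y).Nonempty → ∀ R : ℝ, ∃ C > (0:ℝ),
    ∀ x : E, ‖x‖ ≤ R → Metric.infDist x (hset M c S y) ≤ C * hres M c S y x := by
  intro S
  induction S using Finset.strongInduction with
  | _ S IH =>
  intro y hne R
  by_contra hcon
  push_neg at hcon
  have hseq : ∀ k : ℕ, ∃ x : E, ‖x‖ ≤ R ∧
      (k+1 : ℝ) * hres M c S y x < Metric.infDist x (hset M c S y) := by
    intro k
    obtain ⟨x, hx1, hx2⟩ := hcon (k+1 : ℝ) (by positivity)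
    exact ⟨x, hx1, hx2⟩
  choose x hxR hxlt using hseq
  have hrpos : ∀ k, 0 < hres M c S y (x k) := by
    intro k
    by_contra h
    push_neg at h
    have h0 : hres M c S y (x k) = 0 := le_antisymm h (hres_nonneg M c S y (x k))
    have hmem := mem_of_hres_eq_zero M c h0
    have hd0 : Metric.infDist (x k) (hset M c S y) = 0 := Metric.infDist_zero_of_mem hmem
    have hk := hxlt k
    rw [h0, hd0, mul_zero] at hk
    exact lt_irrefl 0 hk
  have hdpos : ∀ k, 0 < Metric.infDist (x k) (hset M c S y) := by
    intro k
    calc (0:ℝ) ≤ ((k:ℝ)+1) * hres M c S y (x k) :=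
          mul_nonneg (by positivity) (hres_nonneg M c S y (x k))
      _ < _ := hxlt k
  obtain ⟨q0, hq0⟩ := hne
  have hdbd : ∀ k, Metric.infDist (x k) (hset M c S y) ≤ R + ‖q0‖ := by
    intro k
    calc Metric.infDist (x k) (hset M c S y) ≤ dist (x k) q0 :=
          Metric.infDist_le_dist_of_mem hq0
      _ ≤ ‖x k‖ + ‖q0‖ := by rw [dist_eq_norm]; exact norm_sub_le _ _
      _ ≤ R + ‖q0‖ := by linarith [hxR k]
  have hres_le : ∀ k, hres M c S y (x k) ≤ (R + ‖q0‖) / (k+1) := by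
    intro k
    rw [le_div_iff₀ (by positivity : (0:ℝ) < (k:ℝ)+1)]
    calc hres M c S y (x k) * (k+1) = ((k:ℝ)+1) * hres M c S y (x k) := by ring
      _ ≤ Metric.infDist (x k) (hset M c S y) := (hxlt k).le
      _ ≤ R + ‖q0‖ := hdbd k
  have hres_to_zero : Tendsto (fun k => hres M c S y (x k)) atTop (nhds 0) := by
    refine squeeze_zero (fun k => (hres_nonneg M c S y (x k))) hres_le ?_
    exact Tendsto.div_atTop tendsto_const_nhds
      (tendsto_atTop_add_const_right _ 1 tendsto_natCast_atTop_atTop)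
  have hxball : ∀ k, x k ∈ Metric.closedBall (0:E) R := by
    intro k; simpa [Metric.mem_closedBall, dist_eq_norm] using hxR k
  obtain ⟨xb, hxbball, φ, hφ, hφconv⟩ :=
    (isCompact_closedBall (0:E) R).tendsto_subseq hxball
  have hres_sub_zero : Tendsto (fun k => hres M c S y (x (φ k))) atTop (nhds 0) :=
    hres_to_zero.comp hφ.tendsto_atTop
  have hxbres : hres M c S y xb = 0 := by
    have h1 : Tendsto (fun k => hres M c S y (x (φ k))) atTop (nhds (hres M c S y xb)) :=
      ((hres_continuous M c S y).continuousAt.tendsto).comp hφconv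
    exact tendsto_nhds_unique h1 hres_sub_zero
  have hxbmem : xb ∈ hset M c S y := mem_of_hres_eq_zero M c hxbres
  -- the "finisher"
  have finisher : ∀ (y' : G) (R' : ℝ) (z : ℕ → E) (zb : E), zb ∈ hset M c S y' →
      (∃ i ∈ S, 0 < c i zb) → Tendsto z atTop (nhds zb) → (∀ k, ‖z k‖ ≤ R') →
      (∀ k : ℕ, 0 < hres M c S y' (z k)) →
      (∀ k : ℕ, ((k:ℝ)+1) * hres M c S y' (z k) < Metric.infDist (z k) (hset M c S y')) → False := by
    rintro y' R' z zb hzbmem ⟨i, hiS, hipos⟩ hzconv hR' hrpos' hzlt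
    have hsub : S.erase i ⊂ S := Finset.erase_ssubset hiS
    have hzbmem' : zb ∈ hset M c (S.erase i) y' :=
      ⟨hzbmem.1, fun j hj => hzbmem.2 j (Finset.mem_of_mem_erase hj)⟩
    have hQ'ne : (hset M c (S.erase i) y').Nonempty := ⟨zb, hzbmem'⟩
    obtain ⟨C', hC'pos, hC'⟩ := IH (S.erase i) hsub y' hQ'ne R'
    have hres'_le : ∀ k, hres M c (S.erase i) y' (z k) ≤ hres M c S y' (z k) := by
      intro k
      unfold hres
      have := Finset.sum_le_sum_of_subset_of_nonneg (Finset.erase_subset i S)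
        (fun j _ _ => le_max_left (0:ℝ) (-(c j (z k))))
      linarith
    have hqex : ∀ k, ∃ q ∈ hset M c (S.erase i) y',
        dist (z k) q < Metric.infDist (z k) (hset M c (S.erase i) y') + hres M c S y' (z k) := by
      intro k
      exact (Metric.infDist_lt_iff hQ'ne).1 (by linarith [hrpos' k])
    choose q hq hqd using hqex
    have hqbound : ∀ k, dist (z k) (q k) < (C' + 1) * hres M c S y' (z k) := by
      intro k
      calc dist (z k) (q k) < Metric.infDist (z k) (hset M c (S.erase i) y')
            + hres M c S y' (z k) := hqd k
        _ ≤ C' * hres M c (S.erase i) y' (z k) + hres M c S y' (z k) := by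
            linarith [hC' (z k) (hR' k)]
        _ ≤ (C' + 1) * hres M c S y' (z k) := by
            nlinarith [hres'_le k, hres_nonneg M c S y' (z k)]
    have hresz : Tendsto (fun k => hres M c S y' (z k)) atTop (nhds 0) := by
      have h1 : Tendsto (fun k => hres M c S y' (z k)) atTop (nhds (hres M c S y' zb)) :=
        ((hres_continuous M c S y').continuousAt.tendsto).comp hzconv
      rwa [hres_eq_zero_of_mem M c hzbmem] at h1
    have hqconv : Tendsto q atTop (nhds zb) := by
      rw [tendsto_iff_dist_tendsto_zero]
      refine squeeze_zero (g := fun k => (C' + 1) * hres M c S y' (z k) + dist (z k) zb)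
        (fun k => dist_nonneg) (fun k => ?_)
        (by simpa using ((hresz.const_mul (C'+1)).add (tendsto_iff_dist_tendsto_zero.1 hzconv)))
      calc dist (q k) zb ≤ dist (q k) (z k) + dist (z k) zb := dist_triangle _ _ _
        _ ≤ (C' + 1) * hres M c S y' (z k) + dist (z k) zb := by
            rw [dist_comm]; linarith [hqbound k]
    have hciconv : Tendsto (fun k => c i (q k)) atTop (nhds (c i zb)) :=
      ((c i).continuous_of_finiteDimensional.continuousAt.tendsto).comp hqconv
    have hev1 : ∀ᶠ k in atTop, 0 ≤ c i (q k) := hciconv.eventually_const_le hipos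
    have hev2 : ∀ᶠ k : ℕ in atTop, C' + 1 < ((k:ℝ)+1) := by
      obtain ⟨K, hK⟩ := exists_nat_gt (C'+1)
      filter_upwards [eventually_ge_atTop K] with k hk
      have hKk : (K:ℝ) ≤ (k:ℝ) := by exact_mod_cast hk
      linarith
    obtain ⟨k, hk1, hk2⟩ := (hev1.and hev2).exists
    -- q k is feasible for the full system
    have hqfull : q k ∈ hset M c S y' := by
      refine ⟨(hq k).1, fun j hj => ?_⟩
      by_cases hji : j = i
      · subst hji; exact hk1
      · exact (hq k).2 j (Finset.mem_erase.2 ⟨hji, hj⟩)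
    have hcontr : Metric.infDist (z k) (hset M c S y') ≤ (C'+1) * hres M c S y' (z k) :=
      le_trans (Metric.infDist_le_dist_of_mem hqfull) (hqbound k).le
    have := hzlt k
    nlinarith [hrpos' k, mul_lt_mul_of_pos_right hk2 (hrpos' k)]
  -- case analysis at the limit point
  by_cases hA : ∃ i ∈ S, 0 < c i xb
  · -- Case A
    exact finisher y R (fun k => x (φ k)) xb hxbmem hA hφconv (fun k => hxR (φ k))
      (fun k => hrpos (φ k))
      (fun k => by
        calc ((k:ℝ)+1) * hres M c S y (x (φ k)) ≤ ((φ k:ℝ)+1) * hres M c S y (x (φ k)) := by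
              have : (k:ℝ) ≤ (φ k : ℝ) := by exact_mod_cast hφ.le_apply
              nlinarith [hres_nonneg M c S y (x (φ k))]
          _ < _ := hxlt (φ k))
  · -- Case B : all constraints active at xb
    push_neg at hA
    have hczero : ∀ i ∈ S, c i xb = 0 := fun i hi =>
      le_antisymm (hA i hi) (hxbmem.2 i hi)
    set C₀ := hset M c S (0:G) with hC₀def
    have hzeroC₀ : (0:E) ∈ C₀ := ⟨by simp, fun i _ => by simp⟩
    have hC₀ne : C₀.Nonempty := ⟨0, hzeroC₀⟩
    have hQiff : ∀ t, t ∈ hset M c S y ↔ t - xb ∈ C₀ := by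
      intro t
      constructor
      · rintro ⟨h1, h2⟩
        exact ⟨by rw [map_sub, h1, hxbmem.1, sub_self], fun i hi => by
          rw [map_sub, hczero i hi, sub_zero]; exact h2 i hi⟩
      · rintro ⟨h1, h2⟩
        rw [map_sub, hxbmem.1, sub_eq_zero] at h1
        refine ⟨h1, fun i hi => ?_⟩
        have := h2 i hi
        rwa [map_sub, hczero i hi, sub_zero] at this
    have hcone : ∀ (σ : ℝ), 0 < σ → ∀ v ∈ C₀, σ • v ∈ C₀ := by
      rintro σ hσ v ⟨h1, h2⟩
      exact ⟨by rw [_root_.map_smul, h1, smul_zero], fun i hi => by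
        rw [_root_.map_smul, smul_eq_mul]
        exact mul_nonneg hσ.le (h2 i hi)⟩
    -- lineality space
    set L : Submodule ℝ E := (LinearMap.ker M) ⊓ (⨅ i ∈ S, LinearMap.ker (c i)) with hLdef
    have hmemL : ∀ v, v ∈ L ↔ M v = 0 ∧ ∀ i ∈ S, c i v = 0 := by
      intro v
      simp [hLdef, Submodule.mem_inf, Submodule.mem_iInf, LinearMap.mem_ker]
    have hLsub : ∀ l ∈ L, ∀ t, t ∈ C₀ ↔ t - l ∈ C₀ := by
      intro l hl t
      rw [hmemL] at hl
      constructor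
      · rintro ⟨h1, h2⟩
        exact ⟨by rw [map_sub, h1, hl.1, sub_self], fun i hi => by
          rw [map_sub, hl.2 i hi, sub_zero]; exact h2 i hi⟩
      · rintro ⟨h1, h2⟩
        rw [map_sub, hl.1, sub_zero] at h1
        refine ⟨h1, fun i hi => ?_⟩
        have := h2 i hi
        rwa [map_sub, hl.2 i hi, sub_zero] at this
    -- the sequence s and its component w orthogonal to L
    set s : ℕ → E := fun k => x (φ k) - xb with hsdef
    set w : ℕ → E := fun k => s k - (L.starProjection (s k) : E) with hwdef
    have hwL : ∀ k, w k ∈ Lᗮ := fun k => L.sub_starProjection_mem_orthogonal (s k)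
    have hlL : ∀ k, s k - w k ∈ L := fun k => by
      simp only [hwdef, sub_sub_cancel]
      exact L.starProjection_apply_mem (s k)
    -- residual identities
    have hres_s : ∀ k, hres M c S y (x (φ k)) = hres M c S 0 (s k) := fun k =>
      hres_translate M c S y xb (x (φ k)) ⟨hxbmem.1, hczero⟩
    have hres_w : ∀ k, hres M c S 0 (w k) = hres M c S 0 (s k) := by
      intro k
      have hl := hlL k
      rw [hmemL] at hl
      have hwk : w k = s k - (s k - w k) := by abel
      rw [hwk]
      unfold hres
      simp only [map_sub, hl.1, sub_zero]
      congr 1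
      refine Finset.sum_congr rfl fun i hi => ?_
      have hcc := hl.2 i hi
      rw [map_sub, sub_eq_zero] at hcc
      rw [sub_sub_cancel, ← hcc]
    -- distance identities
    have hdist_s : ∀ k, Metric.infDist (x (φ k)) (hset M c S y) = Metric.infDist (s k) C₀ :=
      fun k => infDist_translate' xb hQiff hC₀ne (x (φ k))
    have hdist_w : ∀ k, Metric.infDist (s k) C₀ = Metric.infDist (w k) C₀ := by
      intro k
      have h := infDist_translate' (s k - w k) (hLsub _ (hlL k)) hC₀ne (s k)
      rw [sub_sub_cancel] at h
      exact h
    -- positivity, normalization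
    have hdw : ∀ k, 0 < Metric.infDist (w k) C₀ := by
      intro k
      rw [← hdist_w, ← hdist_s]
      exact hdpos (φ k)
    have hσpos : ∀ k, 0 < ‖w k‖ := by
      intro k
      rcases eq_or_ne (w k) 0 with h | h
      · exfalso
        have := hdw k
        rw [h] at this
        simp [Metric.infDist_zero_of_mem hzeroC₀] at this
      · exact norm_pos_iff.2 h
    set u : ℕ → E := fun k => ‖w k‖⁻¹ • w k with hudef
    have hunorm : ∀ k, ‖u k‖ = 1 := by
      intro k
      rw [hudef]
      simp [norm_smul, Real.norm_of_nonneg (inv_nonneg.2 (norm_nonneg (w k))),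
        inv_mul_cancel₀ (hσpos k).ne']
    have huL : ∀ k, u k ∈ Lᗮ := fun k => Submodule.smul_mem _ _ (hwL k)
    have hres_u : ∀ k, hres M c S 0 (u k) = ‖w k‖⁻¹ * hres M c S 0 (w k) := fun k =>
      hres_smul M c S _ (inv_nonneg.2 (norm_nonneg _)) (w k)
    have hdist_u : ∀ k, Metric.infDist (u k) C₀ = ‖w k‖⁻¹ * Metric.infDist (w k) C₀ := fun k =>
      infDist_smul_cone hC₀ne hcone _ (inv_pos.2 (hσpos k)) (w k)
    have hrupos : ∀ k, 0 < hres M c S 0 (u k) := by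
      intro k
      rw [hres_u, hres_w, ← hres_s]
      exact mul_pos (inv_pos.2 (hσpos k)) (hrpos (φ k))
    have hult : ∀ k : ℕ, ((k:ℝ)+1) * hres M c S 0 (u k) < Metric.infDist (u k) C₀ := by
      intro k
      rw [hres_u, hdist_u, hres_w, ← hres_s, ← hdist_w, ← hdist_s]
      have h1 := hxlt (φ k)
      have h2 : (k:ℝ) ≤ (φ k : ℝ) := by exact_mod_cast hφ.le_apply
      have h3 := hrpos (φ k)
      have h4 : (0:ℝ) < ‖w k‖⁻¹ := inv_pos.2 (hσpos k)
      calc ((k:ℝ)+1) * (‖w k‖⁻¹ * hres M c S y (x (φ k)))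
          = ‖w k‖⁻¹ * (((k:ℝ)+1) * hres M c S y (x (φ k))) := by ring
        _ ≤ ‖w k‖⁻¹ * (((φ k:ℝ)+1) * hres M c S y (x (φ k))) :=
            mul_le_mul_of_nonneg_left
              (mul_le_mul_of_nonneg_right (by linarith) h3.le) h4.le
        _ < ‖w k‖⁻¹ * Metric.infDist (x (φ k)) (hset M c S y) :=
            mul_lt_mul_of_pos_left (hxlt (φ k)) h4
    -- extract convergent subsequence of u
    have huball : ∀ k, u k ∈ Metric.closedBall (0:E) 1 := by
      intro k; simp [Metric.mem_closedBall, dist_eq_norm, hunorm k]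
    obtain ⟨ub, hubball, ψ, hψ, hψconv⟩ := (isCompact_closedBall (0:E) 1).tendsto_subseq huball
    have hubnorm : ‖ub‖ = 1 := by
      have h1 : Tendsto (fun k => ‖u (ψ k)‖) atTop (nhds ‖ub‖) :=
        (continuous_norm.continuousAt.tendsto).comp hψconv
      have h2 : Tendsto (fun k => ‖u (ψ k)‖) atTop (nhds 1) := by
        simp only [hunorm]
        exact tendsto_const_nhds
      exact tendsto_nhds_unique h1 h2
    have hubLperp : ub ∈ Lᗮ := by
      have : IsClosed (Lᗮ : Set E) := Submodule.closed_of_finiteDimensional _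
      exact this.mem_of_tendsto hψconv (Filter.Eventually.of_forall fun k => huL (ψ k))
    -- residual of u (ψ k) tends to 0
    have hresu_le : ∀ k, hres M c S 0 (u k) ≤ 1 / (k+1) := by
      intro k
      rw [le_div_iff₀ (by positivity : (0:ℝ) < (k:ℝ)+1)]
      have h1 := (hult k).le
      have h2 : Metric.infDist (u k) C₀ ≤ 1 := by
        calc Metric.infDist (u k) C₀ ≤ dist (u k) 0 := Metric.infDist_le_dist_of_mem hzeroC₀
          _ = ‖u k‖ := by rw [dist_zero_right]
          _ = 1 := hunorm k
      nlinarith [hres_nonneg M c S (0:G) (u k)]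
    have hresu_zero : Tendsto (fun k => hres M c S 0 (u (ψ k))) atTop (nhds 0) := by
      refine squeeze_zero (g := fun k : ℕ => 1 / ((k:ℝ)+1))
        (fun k => hres_nonneg M c S 0 (u (ψ k))) (fun k => ?_)
        (Tendsto.div_atTop tendsto_const_nhds
          (tendsto_atTop_add_const_right _ 1 tendsto_natCast_atTop_atTop))
      refine le_trans (hresu_le (ψ k)) ?_
      have hkk : (k:ℝ) ≤ (ψ k : ℝ) := by exact_mod_cast hψ.le_apply
      apply div_le_div_of_nonneg_left (by norm_num) (by positivity) (by linarith)
    have hubres : hres M c S 0 ub = 0 := by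
      have h1 : Tendsto (fun k => hres M c S 0 (u (ψ k))) atTop (nhds (hres M c S 0 ub)) :=
        ((hres_continuous M c S (0:G)).continuousAt.tendsto).comp hψconv
      exact tendsto_nhds_unique h1 hresu_zero
    have hubC₀ : ub ∈ C₀ := mem_of_hres_eq_zero M c hubres
    -- ub has a strictly positive constraint
    have hex : ∃ i ∈ S, 0 < c i ub := by
      by_contra hno
      push_neg at hno
      have hall : ∀ i ∈ S, c i ub = 0 := fun i hi => le_antisymm (hno i hi) (hubC₀.2 i hi)
      have hubL : ub ∈ L := (hmemL ub).2 ⟨hubC₀.1, hall⟩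
      have : ub ∈ L ⊓ Lᗮ := ⟨hubL, hubLperp⟩
      rw [Submodule.inf_orthogonal_eq_bot, Submodule.mem_bot] at this
      rw [this] at hubnorm
      simp at hubnorm
    -- apply the finisher to u ∘ ψ
    refine finisher 0 1 (fun k => u (ψ k)) ub hubC₀ hex hψconv (fun k => (hunorm (ψ k)).le)
      (fun k => hrupos (ψ k)) (fun k => ?_)
    calc ((k:ℝ)+1) * hres M c S 0 (u (ψ k)) ≤ ((ψ k:ℝ)+1) * hres M c S 0 (u (ψ k)) := by
          have : (k:ℝ) ≤ (ψ k : ℝ) := by exact_mod_cast hψ.le_apply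
          nlinarith [hres_nonneg M c S (0:G) (u (ψ k))]
      _ < _ := hult (ψ k)

end Hoffman
section Aux

lemma key_limit {a K : ℝ} (hK : 0 ≤ K)
    (h : ∀ t : ℝ, 0 < t → t ≤ 1 → 0 ≤ t * a + t^2 * K) : 0 ≤ a := by
  by_contra hneg
  push_neg at hneg
  set t := min 1 ((-a)/(2*K+1)) with ht
  have hta : 0 < (-a)/(2*K+1) := div_pos (by linarith) (by linarith)
  have h1 : 0 < t := lt_min one_pos hta
  have h2 : t ≤ 1 := min_le_left _ _
  have h3 : t ≤ (-a)/(2*K+1) := min_le_right _ _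
  have h4 : t * K ≤ (-a)/2 := by
    calc t * K ≤ ((-a)/(2*K+1)) * K := mul_le_mul_of_nonneg_right h3 hK
      _ ≤ (-a)/2 := by
          rw [div_mul_eq_mul_div, div_le_div_iff₀ (by positivity) (by norm_num)]
          nlinarith
  have h5 := h t h1 h2
  nlinarith [mul_le_mul_of_nonneg_left h4 h1.le]

variable {E : Type*} [NormedAddCommGroup E] [InnerProductSpace ℝ E]

/-- a minimizer of convex + smooth satisfies the linearized subgradient inequality -/
lemma min_linearize (f g : E → ℝ)
    (hconv : ∀ a b : E, ∀ t : ℝ, 0 < t → t ≤ 1 →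
      f ((1-t) • a + t • b) ≤ (1-t) * f a + t * f b)
    (q grad : E) (K : E → ℝ) (hK : ∀ v, 0 ≤ K v)
    (hexp : ∀ v : E, ∀ t : ℝ, 0 < t → t ≤ 1 →
      g (q + t • v) ≤ g q + t * (inner ℝ grad v : ℝ) + t^2 * K v)
    (hmin : ∀ y, f q + g q ≤ f y + g y) :
    ∀ y, f q - (inner ℝ grad (y - q) : ℝ) ≤ f y := by
  intro y
  have key : 0 ≤ f y - f q + (inner ℝ grad (y - q) : ℝ) := by
    refine key_limit (hK (y - q)) fun t h1 h2 => ?_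
    have hcomb : q + t • (y - q) = (1-t) • q + t • y := by
      rw [smul_sub, sub_smul, one_smul]
      abel
    have e1 := hmin (q + t • (y - q))
    have e2 : f (q + t • (y - q)) ≤ (1-t) * f q + t * f y := by
      rw [hcomb]; exact hconv q y t h1 h2
    have e3 := hexp (y - q) t h1 h2
    nlinarith
  linarith

end Aux

section Proj

variable {n : ℕ}

/-- coordinate projection onto a group of coordinates -/
def projJ (J : Finset (Fin n)) : EuclideanSpace ℝ (Fin n) →ₗ[ℝ] EuclideanSpace ℝ (Fin n) where
  toFun x := WithLp.toLp 2 (fun i => if i ∈ J then x i else 0)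
  map_add' x y := by
    ext i
    by_cases h : i ∈ J <;> simp [h, PiLp.add_apply]
  map_smul' c x := by
    ext i
    by_cases h : i ∈ J <;> simp [h, PiLp.smul_apply, smul_eq_mul, mul_comm]

lemma projJ_apply (J : Finset (Fin n)) (x : EuclideanSpace ℝ (Fin n)) (i : Fin n) :
    projJ J x i = if i ∈ J then x i else 0 := rfl

lemma norm_projJ_sq (J : Finset (Fin n)) (x : EuclideanSpace ℝ (Fin n)) :
    ‖projJ J x‖^2 = ∑ i ∈ J, (x i)^2 := by
  rw [EuclideanSpace.norm_eq, Real.sq_sqrt (by positivity)]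
  rw [← Finset.sum_subset (Finset.subset_univ J) (fun i _ hi => by
    simp [projJ_apply, hi])]
  refine Finset.sum_congr rfl fun i hi => ?_
  simp [projJ_apply, hi, Real.norm_eq_abs, sq_abs]

lemma norm_projJ (J : Finset (Fin n)) (x : EuclideanSpace ℝ (Fin n)) :
    ‖projJ J x‖ = Real.sqrt (∑ i ∈ J, (x i)^2) := by
  rw [← norm_projJ_sq, Real.sqrt_sq (norm_nonneg _)]

lemma inner_projJ (J : Finset (Fin n)) (x y : EuclideanSpace ℝ (Fin n)) :
    (inner ℝ (projJ J x) y : ℝ) = ∑ i ∈ J, x i * y i := by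
  rw [PiLp.inner_apply]
  simp only [RCLike.inner_apply, starRingEnd_apply, star_trivial]
  rw [← Finset.sum_subset (Finset.subset_univ J) (fun i _ hi => by
    simp [projJ_apply, hi])]
  refine Finset.sum_congr rfl fun i hi => by simp [projJ_apply, hi, mul_comm]

lemma inner_projJ_right (J : Finset (Fin n)) (x y : EuclideanSpace ℝ (Fin n)) :
    (inner ℝ x (projJ J y) : ℝ) = ∑ i ∈ J, x i * y i := by
  rw [real_inner_comm, inner_projJ]
  exact Finset.sum_congr rfl fun i _ => mul_comm _ _

lemma inner_projJ_projJ (J : Finset (Fin n)) (x y : EuclideanSpace ℝ (Fin n)) :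
    (inner ℝ (projJ J x) (projJ J y) : ℝ) = ∑ i ∈ J, x i * y i := by
  rw [inner_projJ]
  refine Finset.sum_congr rfl fun i hi => by simp [projJ_apply, hi]

lemma projJ_idem (J : Finset (Fin n)) (x : EuclideanSpace ℝ (Fin n)) :
    projJ J (projJ J x) = projJ J x := by
  ext i
  by_cases h : i ∈ J <;> simp [projJ_apply, h]

lemma projJ_comp_disjoint {J J' : Finset (Fin n)} (h : ∀ i, i ∈ J' → i ∉ J)
    (x : EuclideanSpace ℝ (Fin n)) : projJ J' (projJ J x) = 0 := by
  ext i
  by_cases hi : i ∈ J'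
  · simp [projJ_apply, hi, (h i hi)]
  · simp [projJ_apply, hi]

lemma norm_projJ_le (J : Finset (Fin n)) (x : EuclideanSpace ℝ (Fin n)) :
    ‖projJ J x‖ ≤ ‖x‖ := by
  have h1 : ‖projJ J x‖^2 ≤ ‖x‖^2 := by
    rw [norm_projJ_sq, EuclideanSpace.norm_eq, Real.sq_sqrt (by positivity)]
    calc ∑ i ∈ J, x i ^ 2 ≤ ∑ i : Fin n, x i ^ 2 :=
          Finset.sum_le_sum_of_subset_of_nonneg (Finset.subset_univ J) fun i _ _ => by positivity
      _ = ∑ i : Fin n, ‖x i‖ ^ 2 := Finset.sum_congr rfl fun i _ => by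
          rw [Real.norm_eq_abs, sq_abs]
  rw [← Real.sqrt_sq (norm_nonneg (projJ J x)), ← Real.sqrt_sq (norm_nonneg x)]
  exact Real.sqrt_le_sqrt h1

end Proj

open Matrix


set_option maxHeartbeats 10000000 in
/-- Local error bound for the group LASSO problem
`min (1/2)‖Ax − b‖² + Σ_J w_J ‖x_J‖₂`.  Here `p z = prox_{f₁}(z − Aᵀ(Az − b))`. -/
theorem error_bound_group_lasso {n m : ℕ}
    (𝒥 : Finset (Finset (Fin n))) (h𝒥 : ∀ i : Fin n, ∃! J, J ∈ 𝒥 ∧ i ∈ J)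
    (w : Finset (Fin n) → ℝ) (hw : ∀ J ∈ 𝒥, 0 < w J)
    (A : Matrix (Fin m) (Fin n) ℝ) (b : EuclideanSpace ℝ (Fin m))
    (f₁ : EuclideanSpace ℝ (Fin n) → ℝ)
    (hf₁ : ∀ x, f₁ x = ∑ J ∈ 𝒥, w J * Real.sqrt (∑ i ∈ J, (x i) ^ 2))
    (F : EuclideanSpace ℝ (Fin n) → ℝ)
    (hF : ∀ x, F x = (1 / 2) * ‖Matrix.toEuclideanLin A x - b‖ ^ 2 + f₁ x)
    (p : EuclideanSpace ℝ (Fin n) → EuclideanSpace ℝ (Fin n))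
    (hp : ∀ z, IsProx f₁
      (z - Matrix.toEuclideanLin Aᵀ (Matrix.toEuclideanLin A z - b)) (p z))
    (Xstar : Set (EuclideanSpace ℝ (Fin n)))
    (hXstar : Xstar = {y | ∀ z, F y ≤ F z}) :
    ∀ ν : ℝ, sInf (Set.range F) ≤ ν → ∃ δ > (0 : ℝ), ∃ τ > (0 : ℝ),
      ∀ x : EuclideanSpace ℝ (Fin n), F x ≤ ν → ‖x - p x‖ ≤ δ →
        Metric.infDist x (closure Xstar) ≤ τ * ‖x - p x‖ := by
  classical
  intro ν _hν
  let E := EuclideanSpace ℝ (Fin n)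
  let Em := EuclideanSpace ℝ (Fin m)
  let T : EuclideanSpace ℝ (Fin n) →ₗ[ℝ] EuclideanSpace ℝ (Fin m) := Matrix.toEuclideanLin A
  let Tt : EuclideanSpace ℝ (Fin m) →ₗ[ℝ] EuclideanSpace ℝ (Fin n) := Matrix.toEuclideanLin Aᵀ
  -- adjoint property
  have hadj : ∀ (u : Em) (v : E), (inner ℝ (Tt u) v : ℝ) = (inner ℝ u (T v) : ℝ) := by
    intro u v
    have hAt : Aᴴ = Aᵀ := Matrix.ext fun i j => by simp [Matrix.conjTranspose_apply]
    have hTa : Tt = LinearMap.adjoint T := by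
      show Matrix.toEuclideanLin Aᵀ = LinearMap.adjoint (Matrix.toEuclideanLin A)
      rw [← hAt, Matrix.toEuclideanLin_conjTranspose_eq_adjoint]
    rw [hTa]
    exact LinearMap.adjoint_inner_left T v u
  -- partition facts
  have hdisj : ∀ J ∈ 𝒥, ∀ J' ∈ 𝒥, J ≠ J' → ∀ i : Fin n, i ∈ J → i ∉ J' := by
    intro J hJ J' hJ' hne i hiJ hiJ'
    obtain ⟨K, _, hKuniq⟩ := h𝒥 i
    exact hne ((hKuniq J ⟨hJ, hiJ⟩).trans (hKuniq J' ⟨hJ', hiJ'⟩).symm)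
  have hsum_part : ∀ (f : Fin n → ℝ), ∑ i, f i = ∑ J ∈ 𝒥, ∑ i ∈ J, f i := by
    intro f
    have hcover : Finset.univ = 𝒥.biUnion id := by
      ext i
      simp only [Finset.mem_univ, Finset.mem_biUnion, id, true_iff]
      obtain ⟨J, ⟨hJ, hiJ⟩, _⟩ := h𝒥 i
      exact ⟨J, hJ, hiJ⟩
    have hpd : (↑𝒥 : Set (Finset (Fin n))).PairwiseDisjoint id := by
      intro J hJ J' hJ' hne
      refine Finset.disjoint_left.2 fun i hi hi' => ?_
      exact hdisj J (Finset.mem_coe.1 hJ) J' (Finset.mem_coe.1 hJ') hne i hi hi'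
    rw [hcover, Finset.sum_biUnion hpd]
    rfl
  -- f₁ in terms of projections
  have hf₁p : ∀ x : E, f₁ x = ∑ J ∈ 𝒥, w J * ‖projJ J x‖ := by
    intro x
    rw [hf₁]
    exact Finset.sum_congr rfl fun J _ => by rw [norm_projJ]
  have hf₁nonneg : ∀ x : E, 0 ≤ f₁ x := by
    intro x
    rw [hf₁p]
    exact Finset.sum_nonneg fun J hJ => mul_nonneg (hw J hJ).le (norm_nonneg _)
  have hf₁conv : ∀ a b : E, ∀ t : ℝ, 0 < t → t ≤ 1 →
      f₁ ((1-t) • a + t • b) ≤ (1-t) * f₁ a + t * f₁ b := by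
    intro a b t h1 h2
    rw [hf₁p, hf₁p, hf₁p]
    have hdistr : (1-t) * ∑ J ∈ 𝒥, w J * ‖projJ J a‖ + t * ∑ J ∈ 𝒥, w J * ‖projJ J b‖
        = ∑ J ∈ 𝒥, ((1-t) * (w J * ‖projJ J a‖) + t * (w J * ‖projJ J b‖)) := by
      rw [Finset.mul_sum, Finset.mul_sum, ← Finset.sum_add_distrib]
    rw [hdistr]
    refine Finset.sum_le_sum fun J hJ => ?_
    have hnorm : ‖projJ J ((1-t) • a + t • b)‖ ≤ (1-t) * ‖projJ J a‖ + t * ‖projJ J b‖ := by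
      rw [map_add, LinearMap.map_smul, LinearMap.map_smul]
      calc ‖(1-t) • projJ J a + t • projJ J b‖
          ≤ ‖(1-t) • projJ J a‖ + ‖t • projJ J b‖ := norm_add_le _ _
        _ = (1-t) * ‖projJ J a‖ + t * ‖projJ J b‖ := by
            rw [norm_smul, norm_smul, Real.norm_of_nonneg (by linarith : (0:ℝ) ≤ 1 - t),
              Real.norm_of_nonneg h1.le]
    nlinarith [hw J hJ, norm_nonneg (projJ J a), norm_nonneg (projJ J b)]
  -- continuity
  have hf₁cont : Continuous f₁ := by
    have he : f₁ = fun x => ∑ J ∈ 𝒥, w J * ‖projJ J x‖ := funext hf₁p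
    rw [he]
    exact continuous_finset_sum _ fun J _ =>
      continuous_const.mul ((projJ J).continuous_of_finiteDimensional.norm)
  have hFcont : Continuous F := by
    have he : F = fun x => (1 / 2) * ‖Matrix.toEuclideanLin A x - b‖ ^ 2 + f₁ x := funext hF
    rw [he]
    exact (continuous_const.mul ((((Matrix.toEuclideanLin A).continuous_of_finiteDimensional.sub
      continuous_const).norm).pow 2)).add hf₁cont
  -- coercivity
  obtain ⟨c₀, hc₀pos, hc₀le⟩ : ∃ c > (0:ℝ), ∀ J ∈ 𝒥, c ≤ w J := by
    rcases Finset.eq_empty_or_nonempty 𝒥 with h | h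
    · exact ⟨1, one_pos, by simp [h]⟩
    · obtain ⟨J₀, hJ₀mem, hJ₀min⟩ := Finset.exists_min_image 𝒥 w h
      exact ⟨w J₀, hw J₀ hJ₀mem, hJ₀min⟩
  have hcoer : ∀ x : EuclideanSpace ℝ (Fin n), c₀ * ‖x‖ ≤ f₁ x := by
    intro x
    have e1 : ‖x‖^2 = ∑ J ∈ 𝒥, ‖projJ J x‖^2 := by
      rw [EuclideanSpace.norm_eq, Real.sq_sqrt (by positivity), hsum_part (fun i => ‖x i‖^2)]
      refine Finset.sum_congr rfl fun J _ => ?_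
      rw [norm_projJ_sq]
      exact (Finset.sum_congr rfl fun i _ => by rw [Real.norm_eq_abs, sq_abs]).symm
    have h2 : (0:ℝ) ≤ ∑ J ∈ 𝒥, ‖projJ J x‖ := Finset.sum_nonneg fun J _ => norm_nonneg _
    have hsq : ‖x‖^2 ≤ (∑ J ∈ 𝒥, ‖projJ J x‖)^2 := by
      rw [e1]
      exact Finset.sum_sq_le_sq_sum_of_nonneg fun J _ => norm_nonneg _
    have h1 : ‖x‖ ≤ ∑ J ∈ 𝒥, ‖projJ J x‖ := by
      rw [← Real.sqrt_sq (norm_nonneg x), ← Real.sqrt_sq h2]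
      exact Real.sqrt_le_sqrt hsq
    calc c₀ * ‖x‖ ≤ c₀ * ∑ J ∈ 𝒥, ‖projJ J x‖ := mul_le_mul_of_nonneg_left h1 hc₀pos.le
      _ = ∑ J ∈ 𝒥, c₀ * ‖projJ J x‖ := Finset.mul_sum _ _ _
      _ ≤ ∑ J ∈ 𝒥, w J * ‖projJ J x‖ := Finset.sum_le_sum fun J hJ =>
          mul_le_mul_of_nonneg_right (hc₀le J hJ) (norm_nonneg _)
      _ = f₁ x := (hf₁p x).symm
  have hquadnn : ∀ x : EuclideanSpace ℝ (Fin n),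
      (0:ℝ) ≤ (1 / 2) * ‖Matrix.toEuclideanLin A x - b‖ ^ 2 := fun x => by positivity
  have hFlb : ∀ x : EuclideanSpace ℝ (Fin n), c₀ * ‖x‖ ≤ F x := by
    intro x
    rw [hF]
    linarith [hcoer x, hquadnn x]
  -- existence of a global minimizer
  obtain ⟨xb, hxbmin⟩ : ∃ xb : EuclideanSpace ℝ (Fin n), ∀ z, F xb ≤ F z := by
    have hS₀closed : IsClosed {x : EuclideanSpace ℝ (Fin n) | F x ≤ F 0} :=
      isClosed_le hFcont continuous_const
    have hS₀bdd : {x : EuclideanSpace ℝ (Fin n) | F x ≤ F 0} ⊆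
        Metric.closedBall 0 (F 0 / c₀) := by
      intro x hx
      simp only [Set.mem_setOf_eq] at hx
      rw [Metric.mem_closedBall, dist_zero_right]
      rw [le_div_iff₀ hc₀pos, mul_comm]
      linarith [hFlb x]
    have hcpt : IsCompact {x : EuclideanSpace ℝ (Fin n) | F x ≤ F 0} :=
      (isCompact_closedBall _ _).of_isClosed_subset hS₀closed hS₀bdd
    have hne0 : {x : EuclideanSpace ℝ (Fin n) | F x ≤ F 0}.Nonempty :=
      ⟨0, by simp [Set.mem_setOf_eq]⟩
    obtain ⟨xb, hxbS, hxbmin⟩ := hcpt.exists_isMinOn hne0 hFcont.continuousOn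
    refine ⟨xb, fun z => ?_⟩
    by_cases hz : z ∈ {x : EuclideanSpace ℝ (Fin n) | F x ≤ F 0}
    · exact (isMinOn_iff.1 hxbmin) z hz
    · simp only [Set.mem_setOf_eq, not_le] at hz
      have hxb0 : F xb ≤ F 0 := (isMinOn_iff.1 hxbmin) 0 (by simp [Set.mem_setOf_eq])
      linarith
  -- definitions
  obtain ⟨ybar, hybar⟩ : ∃ y : EuclideanSpace ℝ (Fin m),
      y = Matrix.toEuclideanLin A xb := ⟨_, rfl⟩
  obtain ⟨gbar, hgbar⟩ : ∃ g : EuclideanSpace ℝ (Fin n),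
      g = Matrix.toEuclideanLin Aᵀ (Matrix.toEuclideanLin A xb - b) := ⟨_, rfl⟩
  obtain ⟨Fs, hFs⟩ : ∃ v : ℝ, v = F xb := ⟨_, rfl⟩
  -- stationarity at the minimizer
  have hstat : ∀ v : EuclideanSpace ℝ (Fin n),
      f₁ xb - (inner ℝ gbar v : ℝ) ≤ f₁ (xb + v) := by
    have hg : ∀ y, f₁ xb - (inner ℝ gbar (y - xb) : ℝ) ≤ f₁ y := by
      refine min_linearize f₁ (fun x => (1/2) * ‖Matrix.toEuclideanLin A x - b‖^2) hf₁conv xb gbar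
        (fun v => (1/2) * ‖Matrix.toEuclideanLin A v‖^2) (fun v => by positivity) ?_ ?_
      · intro v t h1 h2
        have hexp : Matrix.toEuclideanLin A (xb + t • v) - b
            = (Matrix.toEuclideanLin A xb - b) + t • Matrix.toEuclideanLin A v := by
          rw [map_add, LinearMap.map_smul]
          abel
        have hin : (inner ℝ (Matrix.toEuclideanLin A xb - b) (Matrix.toEuclideanLin A v) : ℝ)
            = (inner ℝ gbar v : ℝ) := by
          rw [hgbar]
          exact (hadj _ _).symm
        simp only [hexp, norm_add_sq_real, real_inner_smul_right, norm_smul, Real.norm_eq_abs,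
          mul_pow, sq_abs]
        rw [hin]
        ring_nf
        linarith
      · intro y
        have h1 := hxbmin y
        rw [hF xb, hF y] at h1
        linarith
    intro v
    have h2 := hg (xb + v)
    simpa using h2
  -- basic values of f₁
  have hf₁zero : f₁ (0 : EuclideanSpace ℝ (Fin n)) = 0 := by
    rw [hf₁p]
    exact Finset.sum_eq_zero fun J _ => by rw [map_zero, norm_zero, mul_zero]
  have hf₁double : f₁ (xb + xb) = 2 * f₁ xb := by
    rw [hf₁p, hf₁p, Finset.mul_sum]
    refine Finset.sum_congr rfl fun J _ => ?_
    rw [map_add]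
    rw [show projJ J xb + projJ J xb = (2:ℝ) • projJ J xb from (two_smul ℝ _).symm]
    rw [norm_smul, Real.norm_ofNat]
    ring
  have hhxb : f₁ xb + (inner ℝ gbar xb : ℝ) = 0 := by
    have h1 := hstat xb
    rw [hf₁double] at h1
    have h2 := hstat (-xb)
    rw [show xb + -xb = (0 : EuclideanSpace ℝ (Fin n)) from by abel, hf₁zero,
      inner_neg_right] at h2
    linarith
  -- per-group bound on the gradient
  have hsupp : ∀ J ∈ 𝒥, ∀ v : EuclideanSpace ℝ (Fin n),
      f₁ (xb + projJ J v) ≤ f₁ xb + w J * ‖projJ J v‖ := by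
    intro J hJ v
    calc f₁ (xb + projJ J v) = ∑ J' ∈ 𝒥, w J' * ‖projJ J' xb + projJ J' (projJ J v)‖ := by
          rw [hf₁p]
          exact Finset.sum_congr rfl fun J' _ => by rw [map_add]
      _ ≤ ∑ J' ∈ 𝒥, (w J' * ‖projJ J' xb‖ + (if J' = J then w J * ‖projJ J v‖ else 0)) := by
          refine Finset.sum_le_sum fun J' hJ' => ?_
          by_cases h : J' = J
          · subst h
            rw [projJ_idem, if_pos rfl]
            calc w J' * ‖projJ J' xb + projJ J' v‖
                ≤ w J' * (‖projJ J' xb‖ + ‖projJ J' v‖) :=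
                  mul_le_mul_of_nonneg_left (norm_add_le _ _) (hw J' hJ').le
              _ = w J' * ‖projJ J' xb‖ + w J' * ‖projJ J' v‖ := by ring
          · rw [projJ_comp_disjoint (fun i hi => hdisj J' hJ' J hJ h i hi) v,
              add_zero, if_neg h, add_zero]
      _ = f₁ xb + w J * ‖projJ J v‖ := by
          rw [Finset.sum_add_distrib, ← hf₁p, Finset.sum_ite_eq' 𝒥 J, if_pos hJ]
  have hgh : ∀ J ∈ 𝒥, ‖projJ J gbar‖ ≤ w J := by
    intro J hJ
    have h1 := hstat (projJ J (-gbar))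
    have h2 := hsupp J hJ (-gbar)
    have h3 : (inner ℝ gbar (projJ J (-gbar)) : ℝ) = -‖projJ J gbar‖^2 := by
      rw [inner_projJ_right, norm_projJ_sq, ← Finset.sum_neg_distrib]
      refine Finset.sum_congr rfl fun i _ => ?_
      have : (-gbar : EuclideanSpace ℝ (Fin n)) i = -(gbar i) := rfl
      rw [this]
      ring
    have h4 : ‖projJ J (-gbar)‖ = ‖projJ J gbar‖ := by rw [map_neg, norm_neg]
    rcases eq_or_lt_of_le (norm_nonneg (projJ J gbar)) with h0 | h0
    · rw [← h0]
      exact (hw J hJ).le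
    · nlinarith [h1, h2, h3, h4]
  -- fundamental identity
  have hiden : ∀ x : EuclideanSpace ℝ (Fin n),
      F x - Fs = (1/2) * ‖Matrix.toEuclideanLin A x - ybar‖^2
        + (f₁ x + (inner ℝ gbar x : ℝ)) := by
    intro x
    rw [hFs, hF, hF]
    have hsplit : Matrix.toEuclideanLin A x - b
        = (Matrix.toEuclideanLin A x - ybar) + (ybar - b) := by abel
    have h1 : (inner ℝ (Matrix.toEuclideanLin A x - ybar) (ybar - b) : ℝ)
        = (inner ℝ gbar x : ℝ) - (inner ℝ gbar xb : ℝ) := by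
      rw [real_inner_comm, inner_sub_right]
      rw [show (inner ℝ (ybar - b) ybar : ℝ) = (inner ℝ gbar xb : ℝ) from by
        rw [hgbar, hybar, hadj]]
      rw [show (inner ℝ (ybar - b) (Matrix.toEuclideanLin A x) : ℝ) = (inner ℝ gbar x : ℝ) from by
        rw [hgbar, hybar, hadj]]
    have h2 : ‖ybar - b‖^2 = ‖Matrix.toEuclideanLin A xb - b‖^2 := by rw [hybar]
    rw [hsplit, norm_add_sq_real, h1, h2]
    ring_nf
    linarith [hhxb]
  -- group data for the Hoffman bound
  obtain ⟨uu, huu⟩ : ∃ u : {J // J ∈ 𝒥} → EuclideanSpace ℝ (Fin n),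
      u = fun J => if w J.1 ≤ ‖projJ J.1 gbar‖
        then (w J.1)⁻¹ • (-(projJ J.1 gbar)) else 0 := ⟨_, rfl⟩
  obtain ⟨cc, hcc⟩ : ∃ c : {J // J ∈ 𝒥} →
        (EuclideanSpace ℝ (Fin n) →ₗ[ℝ] ℝ),
      c = fun J => (innerSL ℝ (uu J)).toLinearMap := ⟨_, rfl⟩
  obtain ⟨bb, hbb⟩ : ∃ bmaps : {J // J ∈ 𝒥} →
        (EuclideanSpace ℝ (Fin n) →ₗ[ℝ] EuclideanSpace ℝ (Fin n)),
      bmaps = fun J => projJ J.1 -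
        LinearMap.smulRight ((innerSL ℝ (uu J)).toLinearMap) (uu J) := ⟨_, rfl⟩
  have hccx : ∀ J (x : EuclideanSpace ℝ (Fin n)), cc J x = (inner ℝ (uu J) x : ℝ) := by
    intro J x
    rw [hcc]
    rfl
  have hbbx : ∀ J (x : EuclideanSpace ℝ (Fin n)),
      bb J x = projJ J.1 x - (inner ℝ (uu J) x : ℝ) • uu J := by
    intro J x
    rw [hbb]
    rfl
  -- facts about uu in the active case
  have hact_facts : ∀ J : {J // J ∈ 𝒥}, w J.1 ≤ ‖projJ J.1 gbar‖ →
      ‖uu J‖ = 1 ∧ projJ J.1 gbar = -(w J.1) • uu J ∧ ‖projJ J.1 gbar‖ = w J.1 := by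
    intro J hac
    have hJm := J.2
    have hwJ := hw J.1 hJm
    have hEq : ‖projJ J.1 gbar‖ = w J.1 := le_antisymm (hgh J.1 hJm) hac
    have huJ : uu J = (w J.1)⁻¹ • (-(projJ J.1 gbar)) := by
      simp only [huu]
      rw [if_pos hac]
    constructor
    · rw [huJ, norm_smul, norm_neg, hEq, Real.norm_eq_abs, abs_of_pos (by positivity),
        inv_mul_cancel₀ hwJ.ne']
    constructor
    · rw [huJ, smul_smul]
      rw [show -(w J.1) * (w J.1)⁻¹ = -1 from by field_simp]
      simp
    · exact hEq
  -- uu is supported on its group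
  have huu_supp : ∀ J : {J // J ∈ 𝒥}, projJ J.1 (uu J) = uu J := by
    intro J
    simp only [huu]
    by_cases hac : w J.1 ≤ ‖projJ J.1 gbar‖
    · rw [if_pos hac, LinearMap.map_smul, map_neg, projJ_idem]
    · rw [if_neg hac, map_zero]
  have hinner_uu_proj : ∀ J (x : EuclideanSpace ℝ (Fin n)),
      (inner ℝ (uu J) (projJ J.1 x) : ℝ) = (inner ℝ (uu J) x : ℝ) := by
    intro J x
    conv_lhs => rw [← huu_supp J]
    conv_rhs => rw [← huu_supp J]
    rw [inner_projJ, inner_projJ]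
    refine Finset.sum_congr rfl fun i hi => ?_
    rw [projJ_apply, if_pos hi]
  -- the per-group objective pieces
  have hsum_hJ : ∀ x : EuclideanSpace ℝ (Fin n),
      (∑ J : {J // J ∈ 𝒥}, (w J.1 * ‖projJ J.1 x‖ + (inner ℝ (projJ J.1 gbar) x : ℝ)))
      = f₁ x + (inner ℝ gbar x : ℝ) := by
    intro x
    rw [Finset.sum_add_distrib]
    have e1 : ∑ J : {J // J ∈ 𝒥}, w J.1 * ‖projJ J.1 x‖ = f₁ x := by
      rw [hf₁p]
      exact Finset.sum_coe_sort 𝒥 (fun J => w J * ‖projJ J x‖)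
    have e2 : ∑ J : {J // J ∈ 𝒥}, (inner ℝ (projJ J.1 gbar) x : ℝ) = (inner ℝ gbar x : ℝ) := by
      have e3 : (inner ℝ gbar x : ℝ) = ∑ i, gbar i * x i := by
        rw [PiLp.inner_apply]
        exact Finset.sum_congr rfl fun i _ => by
          simp [RCLike.inner_apply, starRingEnd_apply, mul_comm]
      rw [e3, hsum_part (fun i => gbar i * x i),
        ← Finset.sum_coe_sort 𝒥 (fun J => ∑ i ∈ J, gbar i * x i)]
      exact Finset.sum_congr rfl fun J _ => inner_projJ J.1 gbar x
    rw [e1, e2]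
  -- nonnegativity of group pieces
  have hgJx : ∀ (J : {J // J ∈ 𝒥}) (x : EuclideanSpace ℝ (Fin n)),
      (inner ℝ (projJ J.1 gbar) x : ℝ) = (inner ℝ (projJ J.1 gbar) (projJ J.1 x) : ℝ) := by
    intro J x
    rw [inner_projJ, inner_projJ_projJ]
  have hJnonneg : ∀ (J : {J // J ∈ 𝒥}) (x : EuclideanSpace ℝ (Fin n)),
      0 ≤ w J.1 * ‖projJ J.1 x‖ + (inner ℝ (projJ J.1 gbar) x : ℝ) := by
    intro J x
    have h1 : |(inner ℝ (projJ J.1 gbar) x : ℝ)| ≤ ‖projJ J.1 gbar‖ * ‖projJ J.1 x‖ := by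
      rw [hgJx]
      exact abs_real_inner_le_norm _ _
    have h2 : ‖projJ J.1 gbar‖ * ‖projJ J.1 x‖ ≤ w J.1 * ‖projJ J.1 x‖ :=
      mul_le_mul_of_nonneg_right (hgh J.1 J.2) (norm_nonneg _)
    have h3 := abs_le.1 h1
    linarith [h3.1]
  -- decomposition in the active case
  have hactive_decomp : ∀ (J : {J // J ∈ 𝒥}) (x : EuclideanSpace ℝ (Fin n)),
      w J.1 ≤ ‖projJ J.1 gbar‖ →
      ‖projJ J.1 x‖^2 = (inner ℝ (uu J) x : ℝ)^2 + ‖bb J x‖^2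
      ∧ w J.1 * ‖projJ J.1 x‖ + (inner ℝ (projJ J.1 gbar) x : ℝ)
          = w J.1 * (‖projJ J.1 x‖ - (inner ℝ (uu J) x : ℝ))
      ∧ (inner ℝ (uu J) x : ℝ) ≤ ‖projJ J.1 x‖ := by
    intro J x hac
    obtain ⟨hu1, hu2, hu3⟩ := hact_facts J hac
    have hs : (inner ℝ (uu J) (projJ J.1 x) : ℝ) = (inner ℝ (uu J) x : ℝ) := hinner_uu_proj J x
    refine ⟨?_, ?_, ?_⟩
    · rw [hbbx, norm_sub_sq_real]
      have e1 : (inner ℝ (projJ J.1 x) ((inner ℝ (uu J) x : ℝ) • uu J) : ℝ)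
          = (inner ℝ (uu J) x : ℝ)^2 := by
        rw [real_inner_smul_right,
          show (inner ℝ (projJ J.1 x) (uu J) : ℝ) = (inner ℝ (uu J) x : ℝ) from by
            rw [real_inner_comm]; exact hs]
        ring
      have e2 : ‖(inner ℝ (uu J) x : ℝ) • uu J‖^2 = (inner ℝ (uu J) x : ℝ)^2 := by
        rw [norm_smul, mul_pow, hu1, Real.norm_eq_abs, sq_abs, one_pow, mul_one]
      rw [e1, e2]
      ring
    · have e3 : (inner ℝ (projJ J.1 gbar) x : ℝ) = -(w J.1) * (inner ℝ (uu J) x : ℝ) := by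
        rw [hu2, real_inner_smul_left]
      rw [e3]
      ring
    · calc (inner ℝ (uu J) x : ℝ) = (inner ℝ (uu J) (projJ J.1 x) : ℝ) := hs.symm
        _ ≤ ‖uu J‖ * ‖projJ J.1 x‖ := real_inner_le_norm _ _
        _ = ‖projJ J.1 x‖ := by rw [hu1, one_mul]
  -- characterization of vanishing group pieces
  have hJzero : ∀ (J : {J // J ∈ 𝒥}) (x : EuclideanSpace ℝ (Fin n)),
      (w J.1 * ‖projJ J.1 x‖ + (inner ℝ (projJ J.1 gbar) x : ℝ) = 0)
      ↔ (bb J x = 0 ∧ 0 ≤ cc J x) := by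
    intro J x
    have hJm := J.2
    have hwJ := hw J.1 hJm
    by_cases hac : w J.1 ≤ ‖projJ J.1 gbar‖
    · obtain ⟨hpy, hlin, hsle⟩ := hactive_decomp J x hac
      rw [hccx]
      constructor
      · intro h0
        rw [hlin] at h0
        rcases mul_eq_zero.1 h0 with h | h
        · exact absurd h hwJ.ne'
        have hs_eq : ‖projJ J.1 x‖ = (inner ℝ (uu J) x : ℝ) := by linarith
        have hsq : ‖projJ J.1 x‖^2 = (inner ℝ (uu J) x : ℝ)^2 := by rw [hs_eq]
        have h6 : ‖bb J x‖^2 = 0 := by linarith [hpy, hsq]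
        refine ⟨norm_eq_zero.1 ((pow_eq_zero_iff (two_ne_zero)).1 h6), ?_⟩
        rw [← hs_eq]
        exact norm_nonneg _
      · rintro ⟨hb0, hs0⟩
        have h1 : ‖bb J x‖ = 0 := by rw [hb0, norm_zero]
        have h2 : ‖projJ J.1 x‖^2 = (inner ℝ (uu J) x : ℝ)^2 := by
          rw [hpy, h1]
          ring
        have h3 : ‖projJ J.1 x‖ = (inner ℝ (uu J) x : ℝ) := by
          rw [← Real.sqrt_sq (norm_nonneg _), h2, Real.sqrt_sq hs0]
        rw [hlin, h3, sub_self, mul_zero]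
    · push_neg at hac
      have huJ0 : uu J = 0 := by
        simp only [huu]
        rw [if_neg (not_le.2 hac)]
      have hbbeq : bb J x = projJ J.1 x := by
        rw [hbbx, huJ0, inner_zero_left, zero_smul, sub_zero]
      have hcc0 : cc J x = 0 := by rw [hccx, huJ0, inner_zero_left]
      constructor
      · intro h0
        have h1 : |(inner ℝ (projJ J.1 gbar) x : ℝ)| ≤ ‖projJ J.1 gbar‖ * ‖projJ J.1 x‖ := by
          rw [hgJx]
          exact abs_real_inner_le_norm _ _
        have h2 : ‖projJ J.1 x‖ = 0 := by
          nlinarith [(abs_le.1 h1).1, norm_nonneg (projJ J.1 x)]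
        exact ⟨by rw [hbbeq]; exact norm_eq_zero.1 h2, by rw [hcc0]⟩
      · rintro ⟨hb0, _⟩
        have hπ0 : projJ J.1 x = 0 := by rwa [hbbeq] at hb0
        rw [hgJx, hπ0, inner_zero_right, norm_zero, mul_zero, add_zero]
  -- quadratic bound for group residuals
  have hJquad : ∀ R : ℝ, 0 < R → ∀ (J : {J // J ∈ 𝒥}), ∃ κ > (0:ℝ),
      ∀ x : EuclideanSpace ℝ (Fin n), ‖x‖ ≤ R →
      (‖bb J x‖ + max 0 (-(cc J x)))^2
        ≤ κ * (w J.1 * ‖projJ J.1 x‖ + (inner ℝ (projJ J.1 gbar) x : ℝ)) := by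
    intro R hR J
    have hJm := J.2
    have hwJ := hw J.1 hJm
    by_cases hac : w J.1 ≤ ‖projJ J.1 gbar‖
    · refine ⟨4 * R / w J.1, by positivity, fun x hxR => ?_⟩
      obtain ⟨hpy, hlin, hsle⟩ := hactive_decomp J x hac
      have hπR : ‖projJ J.1 x‖ ≤ R := le_trans (norm_projJ_le _ _) hxR
      rw [hccx, hlin, div_mul_eq_mul_div, le_div_iff₀ hwJ]
      have hd : (0:ℝ) ≤ ‖projJ J.1 x‖ - (inner ℝ (uu J) x : ℝ) := by linarith
      rcases le_or_gt 0 (inner ℝ (uu J) x : ℝ) with hs | hs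
      · rw [max_eq_left (by linarith : -(inner ℝ (uu J) x : ℝ) ≤ 0), add_zero]
        have hveq : (‖projJ J.1 x‖ - (inner ℝ (uu J) x : ℝ))
            * (‖projJ J.1 x‖ + (inner ℝ (uu J) x : ℝ)) = ‖bb J x‖^2 := by
          linear_combination hpy
        have hsum2 : ‖projJ J.1 x‖ + (inner ℝ (uu J) x : ℝ) ≤ 2 * R := by linarith
        nlinarith [hveq, hd, hsum2, hwJ, hR,
          mul_le_mul_of_nonneg_left hsum2 (mul_nonneg hwJ.le hd),
          mul_nonneg (mul_nonneg hwJ.le hd) hR.le]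
      · rw [max_eq_right (by linarith : (0:ℝ) ≤ -(inner ℝ (uu J) x : ℝ))]
        nlinarith [hpy, hπR, hs, hwJ, hR, norm_nonneg (bb J x), norm_nonneg (projJ J.1 x),
          sq_nonneg (‖bb J x‖ + (inner ℝ (uu J) x : ℝ)),
          mul_nonneg (mul_nonneg hwJ.le (norm_nonneg (projJ J.1 x)))
            (sub_nonneg.2 hπR),
          mul_nonneg (mul_nonneg hwJ.le hR.le) (neg_nonneg.2 hs.le),
          mul_nonneg (mul_nonneg hwJ.le (norm_nonneg (projJ J.1 x))) hR.le,
          mul_nonneg (mul_nonneg hwJ.le hR.le) (norm_nonneg (projJ J.1 x))]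
    · push_neg at hac
      have huJ0 : uu J = 0 := by
        simp only [huu]
        rw [if_neg (not_le.2 hac)]
      refine ⟨R / (w J.1 - ‖projJ J.1 gbar‖), div_pos hR (by linarith), fun x hxR => ?_⟩
      have hbbeq : bb J x = projJ J.1 x := by
        rw [hbbx, huJ0, inner_zero_left, zero_smul, sub_zero]
      have hcc0 : cc J x = 0 := by rw [hccx, huJ0, inner_zero_left]
      have hπR : ‖projJ J.1 x‖ ≤ R := le_trans (norm_projJ_le _ _) hxR
      have h1 : |(inner ℝ (projJ J.1 gbar) x : ℝ)| ≤ ‖projJ J.1 gbar‖ * ‖projJ J.1 x‖ := by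
        rw [hgJx]
        exact abs_real_inner_le_norm _ _
      rw [hbbeq, hcc0, neg_zero, max_self, add_zero, div_mul_eq_mul_div,
        le_div_iff₀ (by linarith : (0:ℝ) < w J.1 - ‖projJ J.1 gbar‖)]
      have hint1 : (0:ℝ) ≤ (R - ‖projJ J.1 x‖)
          * ((w J.1 - ‖projJ J.1 gbar‖) * ‖projJ J.1 x‖) :=
        mul_nonneg (by linarith) (mul_nonneg (by linarith) (norm_nonneg _))
      have hint2 : (0:ℝ) ≤ R * ((inner ℝ (projJ J.1 gbar) x : ℝ)
          + ‖projJ J.1 gbar‖ * ‖projJ J.1 x‖) :=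
        mul_nonneg hR.le (by linarith [(abs_le.1 h1).1])
      nlinarith [hint1, hint2]
  -- a single constant for all groups
  have hκglobal : ∀ R : ℝ, 0 < R → ∃ κ > (0:ℝ), ∀ (J : {J // J ∈ 𝒥})
      (x : EuclideanSpace ℝ (Fin n)), ‖x‖ ≤ R →
      (‖bb J x‖ + max 0 (-(cc J x)))^2
        ≤ κ * (w J.1 * ‖projJ J.1 x‖ + (inner ℝ (projJ J.1 gbar) x : ℝ)) := by
    intro R hR
    choose κf hκpos hκ using hJquad R hR
    refine ⟨1 + ∑ J : {J // J ∈ 𝒥}, κf J, by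
      have : (0:ℝ) ≤ ∑ J : {J // J ∈ 𝒥}, κf J :=
        Finset.sum_nonneg fun J _ => (hκpos J).le
      linarith, fun J x hxR => ?_⟩
    calc (‖bb J x‖ + max 0 (-(cc J x)))^2
        ≤ κf J * (w J.1 * ‖projJ J.1 x‖ + (inner ℝ (projJ J.1 gbar) x : ℝ)) := hκ J x hxR
      _ ≤ (1 + ∑ J' : {J // J ∈ 𝒥}, κf J')
          * (w J.1 * ‖projJ J.1 x‖ + (inner ℝ (projJ J.1 gbar) x : ℝ)) := by
          refine mul_le_mul_of_nonneg_right ?_ (hJnonneg J x)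
          have := Finset.single_le_sum (f := κf) (fun J' _ => (hκpos J').le)
            (Finset.mem_univ J)
          linarith
  -- global optimality facts
  have hFge : ∀ x, Fs ≤ F x := fun x => by rw [hFs]; exact hxbmin x
  have hXchar : ∀ x, x ∈ Xstar ↔ F x = Fs := by
    intro x
    rw [hXstar]
    constructor
    · intro hx
      exact le_antisymm (by rw [hFs]; exact hx xb) (hFge x)
    · intro hx z
      calc F x = Fs := hx
        _ ≤ F z := hFge z
  have hXne : Xstar.Nonempty := ⟨xb, (hXchar xb).2 hFs.symm⟩
  -- package the equality constraints
  obtain ⟨MM, hMM⟩ : ∃ Mm : EuclideanSpace ℝ (Fin n) →ₗ[ℝ]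
      (EuclideanSpace ℝ (Fin m) × ({J // J ∈ 𝒥} → EuclideanSpace ℝ (Fin n))),
      Mm = LinearMap.prod (Matrix.toEuclideanLin A) (LinearMap.pi bb) := ⟨_, rfl⟩
  have hMMx : ∀ x, MM x = (Matrix.toEuclideanLin A x, fun J => bb J x) := by
    intro x
    rw [hMM]
    rfl
  have hsum_nonneg : ∀ x : EuclideanSpace ℝ (Fin n),
      0 ≤ f₁ x + (inner ℝ gbar x : ℝ) := by
    intro x
    rw [← hsum_hJ]
    exact Finset.sum_nonneg fun J _ => hJnonneg J x
  have hQeq : hset MM cc Finset.univ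
      (ybar, (0 : {J // J ∈ 𝒥} → EuclideanSpace ℝ (Fin n))) = Xstar := by
    ext x
    have hmem : x ∈ hset MM cc Finset.univ
        (ybar, (0 : {J // J ∈ 𝒥} → EuclideanSpace ℝ (Fin n)))
        ↔ (MM x = (ybar, 0) ∧ ∀ J : {J // J ∈ 𝒥}, 0 ≤ cc J x) := by
      constructor
      · rintro ⟨h1, h2⟩
        exact ⟨h1, fun J => h2 J (Finset.mem_univ J)⟩
      · rintro ⟨h1, h2⟩
        exact ⟨h1, fun J _ => h2 J⟩
    rw [hmem, hXchar]
    rw [hMMx, Prod.mk.injEq]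
    constructor
    · rintro ⟨⟨hT, hB⟩, hcs⟩
      have hzero : ∀ J : {J // J ∈ 𝒥},
          w J.1 * ‖projJ J.1 x‖ + (inner ℝ (projJ J.1 gbar) x : ℝ) = 0 := by
        intro J
        exact (hJzero J x).2 ⟨congrFun hB J, hcs J⟩
      have hsum0 : f₁ x + (inner ℝ gbar x : ℝ) = 0 := by
        rw [← hsum_hJ]
        exact Finset.sum_eq_zero fun J _ => hzero J
      have hid := hiden x
      rw [hT, sub_self, norm_zero, hsum0] at hid
      simp only [ne_eq, OfNat.ofNat_ne_zero, not_false_eq_true, zero_pow, mul_zero,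
        add_zero] at hid
      linarith
    · intro hFx
      have h0 : (1/2) * ‖Matrix.toEuclideanLin A x - ybar‖^2
          + (f₁ x + (inner ℝ gbar x : ℝ)) = 0 := by
        rw [← hiden x, hFx, sub_self]
      have hqn : (0:ℝ) ≤ (1/2) * ‖Matrix.toEuclideanLin A x - ybar‖^2 := by positivity
      have hs0 : f₁ x + (inner ℝ gbar x : ℝ) = 0 := by linarith [hsum_nonneg x]
      have hq0 : ‖Matrix.toEuclideanLin A x - ybar‖^2 = 0 := by linarith
      have hTb : Matrix.toEuclideanLin A x = ybar := by
        rw [← sub_eq_zero]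
        exact norm_eq_zero.1 ((pow_eq_zero_iff two_ne_zero).1 hq0)
      have hallzero := (Finset.sum_eq_zero_iff_of_nonneg
        (fun (J : {J // J ∈ 𝒥}) _ => hJnonneg J x)).1 (by rw [hsum_hJ]; exact hs0)
      exact ⟨⟨hTb, funext fun J =>
          ((hJzero J x).1 (hallzero J (Finset.mem_univ J))).1⟩,
        fun J => ((hJzero J x).1 (hallzero J (Finset.mem_univ J))).2⟩
  -- quadratic growth
  have hQG : ∀ R : ℝ, 0 < R → ∃ CQ > (0:ℝ), ∀ x : EuclideanSpace ℝ (Fin n), ‖x‖ ≤ R →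
      (Metric.infDist x Xstar)^2 ≤ CQ * (F x - Fs) := by
    intro R hR
    obtain ⟨CH, hCHpos, hCH⟩ := hoffman MM cc Finset.univ
      (ybar, (0 : {J // J ∈ 𝒥} → EuclideanSpace ℝ (Fin n))) (by rw [hQeq]; exact hXne) R
    obtain ⟨κ, hκpos, hκ⟩ := hκglobal R hR
    obtain ⟨N, hN⟩ : ∃ N : ℝ, N = ((Finset.univ : Finset {J // J ∈ 𝒥}).card : ℝ) := ⟨_, rfl⟩
    have hNnn : 0 ≤ N := by rw [hN]; exact Nat.cast_nonneg _
    refine ⟨CH^2 * (4 + 2 * N * κ), by positivity, fun x hxR => ?_⟩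
    have hFxFs : 0 ≤ F x - Fs := by linarith [hFge x]
    -- bound the Hoffman residual
    have hresb : hres MM cc Finset.univ
        (ybar, (0 : {J // J ∈ 𝒥} → EuclideanSpace ℝ (Fin n))) x
        ≤ ‖Matrix.toEuclideanLin A x - ybar‖
          + ∑ J : {J // J ∈ 𝒥}, (‖bb J x‖ + max 0 (-(cc J x))) := by
      unfold hres
      rw [Finset.sum_add_distrib]
      have h1 : ‖MM x - (ybar, (0 : {J // J ∈ 𝒥} → EuclideanSpace ℝ (Fin n)))‖
          ≤ ‖Matrix.toEuclideanLin A x - ybar‖ + ∑ J : {J // J ∈ 𝒥}, ‖bb J x‖ := by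
        rw [hMMx]
        rw [Prod.norm_def]
        have hfst : ((Matrix.toEuclideanLin A x, fun J => bb J x)
            - (ybar, (0 : {J // J ∈ 𝒥} → EuclideanSpace ℝ (Fin n)))).1
            = Matrix.toEuclideanLin A x - ybar := rfl
        have hsnd : ((Matrix.toEuclideanLin A x, fun J => bb J x)
            - (ybar, (0 : {J // J ∈ 𝒥} → EuclideanSpace ℝ (Fin n)))).2
            = fun J => bb J x := by
          funext J
          simp
        rw [hfst, hsnd]
        have hsumnn : (0:ℝ) ≤ ∑ J : {J // J ∈ 𝒥}, ‖bb J x‖ :=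
          Finset.sum_nonneg fun J _ => norm_nonneg _
        have h2 : ‖fun J => bb J x‖ ≤ ∑ J : {J // J ∈ 𝒥}, ‖bb J x‖ := by
          rw [pi_norm_le_iff_of_nonneg hsumnn]
          intro J
          exact Finset.single_le_sum (fun J' _ => norm_nonneg (bb J' x)) (Finset.mem_univ J)
        rcases max_cases ‖Matrix.toEuclideanLin A x - ybar‖ ‖fun J => bb J x‖ with
          ⟨hmax, _⟩ | ⟨hmax, _⟩ <;> rw [hmax]
        · linarith
        · linarith [norm_nonneg (Matrix.toEuclideanLin A x - ybar)]
      linarith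
    -- combine
    have hdist := hCH x hxR
    rw [hQeq] at hdist
    have hrnn := hres_nonneg MM cc Finset.univ
      (ybar, (0 : {J // J ∈ 𝒥} → EuclideanSpace ℝ (Fin n))) x
    have hdnn : 0 ≤ Metric.infDist x Xstar := Metric.infDist_nonneg
    -- square bounds
    have hS2 : (∑ J : {J // J ∈ 𝒥}, (‖bb J x‖ + max 0 (-(cc J x))))^2
        ≤ N * ∑ J : {J // J ∈ 𝒥}, (‖bb J x‖ + max 0 (-(cc J x)))^2 := by
      rw [hN]
      exact sq_sum_le_card_mul_sum_sq
    have hsumr : ∑ J : {J // J ∈ 𝒥}, (‖bb J x‖ + max 0 (-(cc J x)))^2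
        ≤ κ * (F x - Fs) := by
      calc ∑ J : {J // J ∈ 𝒥}, (‖bb J x‖ + max 0 (-(cc J x)))^2
          ≤ ∑ J : {J // J ∈ 𝒥},
            κ * (w J.1 * ‖projJ J.1 x‖ + (inner ℝ (projJ J.1 gbar) x : ℝ)) :=
            Finset.sum_le_sum fun J _ => hκ J x hxR
        _ = κ * (f₁ x + (inner ℝ gbar x : ℝ)) := by rw [← Finset.mul_sum, hsum_hJ]
        _ ≤ κ * (F x - Fs) := by
            refine mul_le_mul_of_nonneg_left ?_ hκpos.le
            have := hiden x
            nlinarith [sq_nonneg ‖Matrix.toEuclideanLin A x - ybar‖]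
    have ha0 : ‖Matrix.toEuclideanLin A x - ybar‖^2 ≤ 2 * (F x - Fs) := by
      have := hiden x
      linarith [hsum_nonneg x]
    have hressq : (hres MM cc Finset.univ
        (ybar, (0 : {J // J ∈ 𝒥} → EuclideanSpace ℝ (Fin n))) x)^2
        ≤ (4 + 2 * N * κ) * (F x - Fs) := by
      have h3 : (hres MM cc Finset.univ
          (ybar, (0 : {J // J ∈ 𝒥} → EuclideanSpace ℝ (Fin n))) x)^2
          ≤ (‖Matrix.toEuclideanLin A x - ybar‖
            + ∑ J : {J // J ∈ 𝒥}, (‖bb J x‖ + max 0 (-(cc J x))))^2 := by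
        have hrhsnn : (0:ℝ) ≤ ‖Matrix.toEuclideanLin A x - ybar‖
            + ∑ J : {J // J ∈ 𝒥}, (‖bb J x‖ + max 0 (-(cc J x))) := by
          have : (0:ℝ) ≤ ∑ J : {J // J ∈ 𝒥}, (‖bb J x‖ + max 0 (-(cc J x))) :=
            Finset.sum_nonneg fun J _ => add_nonneg (norm_nonneg _) (le_max_left _ _)
          linarith [norm_nonneg (Matrix.toEuclideanLin A x - ybar)]
        exact pow_le_pow_left₀ hrnn hresb 2
      have h4 : (‖Matrix.toEuclideanLin A x - ybar‖
          + ∑ J : {J // J ∈ 𝒥}, (‖bb J x‖ + max 0 (-(cc J x))))^2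
          ≤ 2 * ‖Matrix.toEuclideanLin A x - ybar‖^2
            + 2 * (∑ J : {J // J ∈ 𝒥}, (‖bb J x‖ + max 0 (-(cc J x))))^2 := by
        nlinarith [sq_nonneg (‖Matrix.toEuclideanLin A x - ybar‖
          - ∑ J : {J // J ∈ 𝒥}, (‖bb J x‖ + max 0 (-(cc J x))))]
      nlinarith [hS2, hsumr, ha0, hNnn, hκpos, hFxFs, mul_le_mul_of_nonneg_left hsumr hNnn]
    calc (Metric.infDist x Xstar)^2
        ≤ (CH * hres MM cc Finset.univ
            (ybar, (0 : {J // J ∈ 𝒥} → EuclideanSpace ℝ (Fin n))) x)^2 :=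
          pow_le_pow_left₀ hdnn hdist 2
      _ = CH^2 * (hres MM cc Finset.univ
            (ybar, (0 : {J // J ∈ 𝒥} → EuclideanSpace ℝ (Fin n))) x)^2 := by ring
      _ ≤ CH^2 * ((4 + 2 * N * κ) * (F x - Fs)) :=
          mul_le_mul_of_nonneg_left hressq (by positivity)
      _ = CH^2 * (4 + 2 * N * κ) * (F x - Fs) := by ring
  -- operator norm constant
  obtain ⟨Kop, hKoppos, hKop⟩ : ∃ K > (0:ℝ), ∀ v : EuclideanSpace ℝ (Fin n),
      ‖Matrix.toEuclideanLin Aᵀ (Matrix.toEuclideanLin A v)‖ ≤ K * ‖v‖ := by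
    obtain ⟨T1, hT1⟩ : ∃ T1 : EuclideanSpace ℝ (Fin n) →L[ℝ] EuclideanSpace ℝ (Fin m),
        T1 = LinearMap.toContinuousLinearMap (Matrix.toEuclideanLin A) := ⟨_, rfl⟩
    obtain ⟨T2, hT2⟩ : ∃ T2 : EuclideanSpace ℝ (Fin m) →L[ℝ] EuclideanSpace ℝ (Fin n),
        T2 = LinearMap.toContinuousLinearMap (Matrix.toEuclideanLin Aᵀ) := ⟨_, rfl⟩
    have hT1x : ∀ v, T1 v = Matrix.toEuclideanLin A v := fun v => by
      rw [hT1]; rfl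
    have hT2x : ∀ v, T2 v = Matrix.toEuclideanLin Aᵀ v := fun v => by
      rw [hT2]; rfl
    refine ⟨‖T2‖ * ‖T1‖ + 1, by positivity, fun v => ?_⟩
    calc ‖Matrix.toEuclideanLin Aᵀ (Matrix.toEuclideanLin A v)‖
        = ‖T2 (T1 v)‖ := by rw [hT1x, hT2x]
      _ ≤ ‖T2‖ * ‖T1 v‖ := T2.le_opNorm _
      _ ≤ ‖T2‖ * (‖T1‖ * ‖v‖) :=
          mul_le_mul_of_nonneg_left (T1.le_opNorm v) (norm_nonneg _)
      _ ≤ (‖T2‖ * ‖T1‖ + 1) * ‖v‖ := by nlinarith [norm_nonneg v]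
  -- prox subgradient inequality
  have hproxsub : ∀ x y : EuclideanSpace ℝ (Fin n),
      f₁ (p x) - (inner ℝ ((p x)
        - (x - Matrix.toEuclideanLin Aᵀ (Matrix.toEuclideanLin A x - b))) (y - p x) : ℝ)
        ≤ f₁ y := by
    intro x
    refine min_linearize f₁
      (fun y => (1/2) * ‖y - (x - Matrix.toEuclideanLin Aᵀ (Matrix.toEuclideanLin A x - b))‖^2)
      hf₁conv (p x)
      ((p x) - (x - Matrix.toEuclideanLin Aᵀ (Matrix.toEuclideanLin A x - b)))
      (fun v => (1/2) * ‖v‖^2) (fun v => by positivity) ?_ ?_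
    · intro v t h1 h2
      have hexp : p x + t • v - (x - Matrix.toEuclideanLin Aᵀ (Matrix.toEuclideanLin A x - b))
          = (p x - (x - Matrix.toEuclideanLin Aᵀ (Matrix.toEuclideanLin A x - b))) + t • v := by
        abel
      simp only [hexp, norm_add_sq_real, real_inner_smul_right, norm_smul, Real.norm_eq_abs,
        mul_pow, sq_abs]
      ring_nf
      linarith
    · intro y
      exact hp x y
  -- radius for the sublevel set
  obtain ⟨R, hRpos, hRx, hRq⟩ : ∃ R : ℝ, 0 < R ∧
      (∀ x : EuclideanSpace ℝ (Fin n), F x ≤ ν → ‖x‖ ≤ R) ∧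
      (∀ x : EuclideanSpace ℝ (Fin n), F x ≤ ν → ‖x - p x‖ ≤ 1 → ‖p x‖ ≤ R) := by
    have hxb : ∀ x : EuclideanSpace ℝ (Fin n), F x ≤ ν → ‖x‖ ≤ |ν| / c₀ := by
      intro x hx
      have h1 : c₀ * ‖x‖ ≤ ν := le_trans (hFlb x) hx
      have h2 : ν ≤ |ν| := le_abs_self ν
      rw [le_div_iff₀ hc₀pos]
      nlinarith
    refine ⟨|ν| / c₀ + 1, by positivity, fun x hx => ?_, fun x hx hpx => ?_⟩
    · linarith [hxb x hx]
    · have h3 : ‖p x‖ ≤ ‖x‖ + ‖x - p x‖ := by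
        calc ‖p x‖ = ‖x - (x - p x)‖ := by congr 1; abel
          _ ≤ ‖x‖ + ‖x - p x‖ := norm_sub_le _ _
      linarith [hxb x hx]
  obtain ⟨CQ, hCQpos, hCQ⟩ := hQG R hRpos
  refine ⟨1, one_pos, CQ * (Kop + 1) + 1, by positivity, fun x hFx hδ => ?_⟩
  rw [Metric.infDist_closure]
  obtain ⟨ρ, hρ⟩ : ∃ r : ℝ, r = ‖x - p x‖ := ⟨_, rfl⟩
  rw [← hρ] at hδ ⊢
  have hρnn : 0 ≤ ρ := hρ ▸ norm_nonneg _
  obtain ⟨v, hv⟩ : ∃ v : EuclideanSpace ℝ (Fin n), v =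
      (x - Matrix.toEuclideanLin Aᵀ (Matrix.toEuclideanLin A x - b)) - p x
        + Matrix.toEuclideanLin Aᵀ (Matrix.toEuclideanLin A (p x) - b) := ⟨_, rfl⟩
  have hFineq : ∀ y, F (p x) + (inner ℝ v (y - p x) : ℝ) ≤ F y := by
    intro y
    have h1 := hproxsub x y
    have hβ : Matrix.toEuclideanLin A y - b
        = (Matrix.toEuclideanLin A (p x) - b) + Matrix.toEuclideanLin A (y - p x) := by
      rw [map_sub]
      abel
    have h2 : (1/2) * ‖Matrix.toEuclideanLin A (p x) - b‖^2
        + (inner ℝ (Matrix.toEuclideanLin Aᵀ (Matrix.toEuclideanLin A (p x) - b)) (y - p x) : ℝ)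
        ≤ (1/2) * ‖Matrix.toEuclideanLin A y - b‖^2 := by
      rw [hβ, norm_add_sq_real, hadj]
      nlinarith [sq_nonneg ‖Matrix.toEuclideanLin A (y - p x)‖]
    have h1' : f₁ (p x) + (inner ℝ ((x - Matrix.toEuclideanLin Aᵀ
        (Matrix.toEuclideanLin A x - b)) - p x) (y - p x) : ℝ) ≤ f₁ y := by
      rw [show ((p x) - (x - Matrix.toEuclideanLin Aᵀ (Matrix.toEuclideanLin A x - b)))
          = -((x - Matrix.toEuclideanLin Aᵀ (Matrix.toEuclideanLin A x - b)) - p x) from by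
            abel, inner_neg_left] at h1
      linarith
    rw [hF y, hF (p x), hv, inner_add_left]
    linarith [h1', h2]
  have hvb : ‖v‖ ≤ (Kop + 1) * ρ := by
    have e1 : Matrix.toEuclideanLin Aᵀ (Matrix.toEuclideanLin A x - b)
        - Matrix.toEuclideanLin Aᵀ (Matrix.toEuclideanLin A (p x) - b)
        = Matrix.toEuclideanLin Aᵀ (Matrix.toEuclideanLin A (x - p x)) := by
      rw [← map_sub]
      congr 1
      rw [map_sub (Matrix.toEuclideanLin A)]
      abel
    have hveq : v = (x - p x)
        - Matrix.toEuclideanLin Aᵀ (Matrix.toEuclideanLin A (x - p x)) := by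
      rw [hv, ← e1]
      abel
    rw [hveq]
    calc ‖(x - p x) - Matrix.toEuclideanLin Aᵀ (Matrix.toEuclideanLin A (x - p x))‖
        ≤ ‖x - p x‖ + ‖Matrix.toEuclideanLin Aᵀ (Matrix.toEuclideanLin A (x - p x))‖ :=
          norm_sub_le _ _
      _ ≤ ‖x - p x‖ + Kop * ‖x - p x‖ := by linarith [hKop (x - p x)]
      _ = (Kop + 1) * ρ := by rw [← hρ]; ring
  rcases eq_or_lt_of_le hρnn with hρ0 | hρpos
  · have hxpx : x = p x := by
      have h1 : ‖x - p x‖ = 0 := by rw [← hρ, ← hρ0]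
      rwa [norm_sub_eq_zero_iff] at h1
    have hv0 : v = 0 := by
      have h1 : ‖v‖ ≤ 0 := by
        have := hvb
        rw [← hρ0, mul_zero] at this
        exact this
      exact norm_le_zero_iff.1 h1
    have hpXstar : p x ∈ Xstar := by
      rw [hXstar]
      intro z
      have h1 := hFineq z
      rw [hv0, inner_zero_left, add_zero] at h1
      exact h1
    have h2 : Metric.infDist x Xstar = 0 := by
      rw [hxpx]
      exact Metric.infDist_zero_of_mem hpXstar
    rw [h2, ← hρ0, mul_zero]
  · have hqball : ‖p x‖ ≤ R := hRq x hFx (hρ ▸ hδ)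
    obtain ⟨d, hd⟩ : ∃ d : ℝ, d = Metric.infDist (p x) Xstar := ⟨_, rfl⟩
    have hdnn : 0 ≤ d := hd ▸ Metric.infDist_nonneg
    have hFp : F (p x) - Fs ≤ (Kop + 1) * ρ * d := by
      refine le_of_forall_pos_le_add fun ε hε => ?_
      have hε' : 0 < ε / ((Kop + 1) * ρ) := by positivity
      obtain ⟨q', hq'mem, hq'd⟩ := (Metric.infDist_lt_iff hXne).1
        (show Metric.infDist (p x) Xstar < d + ε / ((Kop + 1) * ρ) by
          rw [← hd]; linarith)
      have hFq' : F q' = Fs := (hXchar q').1 hq'mem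
      have h1 := hFineq q'
      rw [hFq'] at h1
      have h2 : -(‖v‖ * ‖q' - p x‖) ≤ (inner ℝ v (q' - p x) : ℝ) := by
        have h3 := abs_real_inner_le_norm v (q' - p x)
        linarith [(abs_le.1 h3).1]
      have h3 : ‖q' - p x‖ < d + ε / ((Kop + 1) * ρ) := by
        rw [← dist_eq_norm, dist_comm]
        exact hq'd
      have h4 : ‖v‖ * ‖q' - p x‖ ≤ (Kop+1) * ρ * (d + ε / ((Kop + 1) * ρ)) :=
        mul_le_mul hvb h3.le (norm_nonneg _) (by positivity)
      have h5 : (Kop+1) * ρ * (d + ε / ((Kop + 1) * ρ)) = (Kop+1) * ρ * d + ε := by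
        field_simp
      linarith
    have hQGp := hCQ (p x) hqball
    have hd2 : d^2 ≤ CQ * ((Kop + 1) * ρ * d) := by
      calc d^2 ≤ CQ * (F (p x) - Fs) := by rw [hd]; exact hQGp
        _ ≤ CQ * ((Kop + 1) * ρ * d) := mul_le_mul_of_nonneg_left hFp hCQpos.le
    have hdle : d ≤ CQ * (Kop + 1) * ρ := by
      rcases eq_or_lt_of_le hdnn with h0 | h0
      · rw [← h0]
        positivity
      · refine le_of_mul_le_mul_right ?_ h0
        calc d * d = d^2 := by ring
          _ ≤ CQ * ((Kop + 1) * ρ * d) := hd2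
          _ = CQ * (Kop + 1) * ρ * d := by ring
    calc Metric.infDist x Xstar
        ≤ Metric.infDist (p x) Xstar + dist x (p x) := Metric.infDist_le_infDist_add_dist
      _ = d + ρ := by rw [← hd, dist_eq_norm, ← hρ]
      _ ≤ CQ * (Kop + 1) * ρ + ρ := by linarith
      _ = (CQ * (Kop + 1) + 1) * ρ := by ring
end

section
/- Let ℝⁿ be decomposed into K coordinate blocks, x = (x_1,…,x_K) with x_k ∈ ℝ^{n_k}. Let f₁(x) = Σ_{k=1}^K d_k(x_k) with each d_k : ℝ^{n_k} → ℝ convex, and let f₂ : ℝⁿ → ℝ be convex and differentiable with L-Lipschitz continuous gradient and block coordinate-wise strongly convex with modulus γ > 0; set F = f₁ + f₂. Let (x^r) be generated by the block coordinate descent method with cyclic updates: at iteration r = sK + k (1 ≤ k ≤ K), x_k^{r+1} exactly minimizes F over the k-th block with the other blocks fixed at their current values, and x_j^{r+1} = x_j^r for j ≠ k. Then for every cycle s there exists a vector e^s ∈ ℝⁿ such that x^{(s+1)K} = prox_{f₁}( x^{sK} − ∇f₂(x^{sK}) + e^s ) and ‖e^s‖ ≤ K(L+1)·‖x^{(s+1)K}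 − x^{sK}‖; that is, BCD is an APS method with stepsize 1 and error constant κ = K(L+1). -/
open Set Finset RealInnerProductSpace

set_option linter.unusedSectionVars false
set_option linter.unusedVariables false

lemma descent_aux {E : Type*} [NormedAddCommGroup E] [InnerProductSpace ℝ E] [CompleteSpace E]
    (f : E → ℝ) (g : E → E) (hg : ∀ x, HasGradientAt f (g x) x)
    (L : ℝ) (hL : 0 ≤ L) (hLip : ∀ x y, ‖g x - g y‖ ≤ L * ‖x - y‖)
    (u v : E) : f v ≤ f u + ⟪g u, v - u⟫ + L * ‖v - u‖ ^ 2 := by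
  set c := g u with hc
  set h : E → ℝ := fun z => f z - ⟪c, z⟫ with hh
  have hder : ∀ z, HasFDerivAt h
      ((InnerProductSpace.toDual ℝ E (g z)) - (InnerProductSpace.toDual ℝ E c) : E →L[ℝ] ℝ) z := by
    intro z
    exact ((hg z).hasFDerivAt).sub ((InnerProductSpace.toDual ℝ E c).hasFDerivAt)
  have hbound : ∀ z ∈ segment ℝ u v,
      ‖((InnerProductSpace.toDual ℝ E (g z)) - (InnerProductSpace.toDual ℝ E c) : E →L[ℝ] ℝ)‖
        ≤ L * ‖v - u‖ := by
    intro z hz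
    rw [← map_sub]
    rw [LinearIsometryEquiv.norm_map]
    obtain ⟨a, b, ha, hb, hab, rfl⟩ := hz
    have hz1 : a • u + b • v - u = b • (v - u) := by
      have : a = 1 - b := by linarith
      rw [this]; module
    calc ‖g (a • u + b • v) - c‖ ≤ L * ‖a • u + b • v - u‖ := hLip _ _
      _ = L * (b * ‖v - u‖) := by rw [hz1, norm_smul, Real.norm_eq_abs, abs_of_nonneg hb]
      _ ≤ L * (1 * ‖v - u‖) := by
          have : b ≤ 1 := by linarith
          have h0 : (0:ℝ) ≤ ‖v - u‖ := norm_nonneg _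
          nlinarith [mul_nonneg (mul_nonneg hL (sub_nonneg.mpr this)) h0]
      _ = L * ‖v - u‖ := by ring
  have key := (convex_segment u v).norm_image_sub_le_of_norm_hasFDerivWithin_le
    (fun z _ => (hder z).hasFDerivWithinAt) hbound (left_mem_segment ℝ u v) (right_mem_segment ℝ u v)
  have h1 : h v - h u = f v - f u - ⟪c, v - u⟫ := by
    simp [hh, inner_sub_right]; ring
  have h2 : |h v - h u| ≤ L * ‖v - u‖ * ‖v - u‖ := by
    simpa [Real.norm_eq_abs] using key
  have := abs_le.mp h2
  nlinarith [sq_nonneg ‖v - u‖]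

lemma le_of_sq_le_sq' {a b : ℝ} (hb : 0 ≤ b) (h : a ^ 2 ≤ b ^ 2) : a ≤ b := by
  nlinarith [sq_nonneg (a - b), sq_nonneg (a + b)]

section helpers

variable {ι : Type*} [Fintype ι] [DecidableEq ι] {B : ι → Type*}
  [∀ i, NormedAddCommGroup (B i)] [∀ i, InnerProductSpace ℝ (B i)]

lemma piLp_apply_norm_le (w : PiLp 2 B) (k : ι) : ‖w k‖ ≤ ‖w‖ := by
  refine le_of_sq_le_sq' (norm_nonneg _) ?_
  rw [PiLp.norm_sq_eq_of_L2]
  exact Finset.single_le_sum (f := fun j => ‖w j‖ ^ 2) (fun j _ => sq_nonneg _) (Finset.mem_univ k)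

lemma piLp_inner_sub_single (w u₁ u₂ : PiLp 2 B) (k : ι) (h : ∀ j, j ≠ k → u₁ j = u₂ j) :
    ⟪w, u₁ - u₂⟫ = ⟪w k, u₁ k - u₂ k⟫ := by
  rw [PiLp.inner_apply, Finset.sum_eq_single k]
  · rw [PiLp.sub_apply]
  · intro j _ hj
    rw [PiLp.sub_apply, h j hj, sub_self, inner_zero_right]
  · simp

lemma piLp_norm_sub_single (u₁ u₂ : PiLp 2 B) (k : ι) (h : ∀ j, j ≠ k → u₁ j = u₂ j) :
    ‖u₁ - u₂‖ = ‖u₁ k - u₂ k‖ := by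
  have h2 : ‖u₁ - u₂‖ ^ 2 = ‖u₁ k - u₂ k‖ ^ 2 := by
    rw [PiLp.norm_sq_eq_of_L2, Finset.sum_eq_single k]
    · rw [PiLp.sub_apply]
    · intro j _ hj
      rw [PiLp.sub_apply, h j hj, sub_self, norm_zero]
      exact zero_pow two_ne_zero
    · simp
  have h3 := Real.sqrt_sq (norm_nonneg (u₁ - u₂))
  rw [← h3, h2, Real.sqrt_sq (norm_nonneg _)]

lemma block_subgrad [CompleteSpace (PiLp 2 B)]
    (f₂ : PiLp 2 B → ℝ) (g : PiLp 2 B → PiLp 2 B) (hg : ∀ x, HasGradientAt f₂ (g x) x)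
    (L : ℝ) (hL : 0 ≤ L) (hLip : ∀ u v, ‖g u - g v‖ ≤ L * ‖u - v‖)
    (k : ι) (dk : B k → ℝ) (hdk : ConvexOn ℝ Set.univ dk)
    (a q : PiLp 2 B) (hq : q = Function.update a k (q k))
    (hmin : ∀ z, dk (q k) + f₂ q ≤ dk z + f₂ (WithLp.toLp 2 (Function.update a k z)))
    (y : B k) : dk (q k) ≤ dk y + ⟪g q k, y - q k⟫ := by
  by_contra hcon
  push_neg at hcon
  have hA0 : dk y + ⟪g q k, y - q k⟫ - dk (q k) < 0 := by linarith
  set p : B k := q k with hp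
  set A : ℝ := dk y + ⟪g q k, y - p⟫ - dk p with hAdef
  set Bq : ℝ := L * ‖y - p‖ ^ 2 with hBq
  have hBq0 : 0 ≤ Bq := mul_nonneg hL (sq_nonneg _)
  set t : ℝ := min 1 (-A / (2 * (Bq + 1))) with ht
  have ht0 : 0 < t := lt_min one_pos (div_pos (by linarith) (by linarith))
  have ht1 : t ≤ 1 := min_le_left _ _
  have htB : Bq * t ≤ -A / 2 := by
    have h1 : t ≤ -A / (2 * (Bq + 1)) := min_le_right _ _
    have h2 : (0:ℝ) < 2 * (Bq + 1) := by linarith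
    have h3 : Bq * t ≤ Bq * (-A / (2 * (Bq + 1))) :=
      mul_le_mul_of_nonneg_left h1 hBq0
    have h4 : Bq * (-A / (2 * (Bq + 1))) ≤ (Bq + 1) * (-A / (2 * (Bq + 1))) :=
      mul_le_mul_of_nonneg_right (by linarith) (le_of_lt (div_pos (by linarith) h2))
    have h5 : (Bq + 1) * (-A / (2 * (Bq + 1))) = -A / 2 := by
      field_simp
    linarith
  set yt : B k := (1 - t) • p + t • y with hyt
  have hcvx : dk yt ≤ (1 - t) * dk p + t * dk y :=
    hdk.2 (Set.mem_univ p) (Set.mem_univ y) (by linarith) (le_of_lt ht0) (by ring)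
  have hmin' := hmin yt
  have hdes := descent_aux f₂ g hg L hL hLip q (WithLp.toLp 2 (Function.update a k yt))
  have hoff : ∀ j, j ≠ k → (WithLp.toLp 2 (Function.update a k yt) : PiLp 2 B) j = q j := by
    intro j hj
    rw [PiLp.toLp_apply, Function.update_of_ne hj]
    conv_rhs => rw [hq]
    rw [Function.update_of_ne hj]
  rw [piLp_inner_sub_single (g q) (WithLp.toLp 2 (Function.update a k yt)) q k hoff,
    piLp_norm_sub_single (WithLp.toLp 2 (Function.update a k yt)) q k hoff] at hdes
  simp only [PiLp.toLp_apply, Function.update_self] at hdes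
  have hytp : yt - p = t • (y - p) := by rw [hyt]; module
  rw [hytp, real_inner_smul_right, norm_smul, Real.norm_eq_abs,
    abs_of_pos ht0, mul_pow] at hdes
  have key : (0:ℝ) ≤ t * (dk y + ⟪g q k, y - p⟫ - dk p) + (L * ‖y - p‖ ^ 2) * t ^ 2 := by
    nlinarith [hmin', hdes, hcvx]
  have h5 : (0:ℝ) ≤ (dk y + ⟪g q k, y - p⟫ - dk p) + (L * ‖y - p‖ ^ 2) * t := by
    by_contra h6
    push_neg at h6
    nlinarith [mul_pos ht0 (neg_pos.mpr h6)]
  rw [← hAdef, ← hBq] at h5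
  linarith [hA0]

end helpers

/-- The cyclic block coordinate descent method for `F = f₁ + f₂`, with `f₁` block-separable
and `f₂` smooth and block coordinate-wise strongly convex, is an approximate proximal
splitting method with unit stepsize and error constant `κ = K(L+1)`: each full cycle
`x^{sK} ↦ x^{(s+1)K}` is a prox step with an error `e^s` satisfying
`‖e^s‖ ≤ K(L+1)‖x^{(s+1)K} − x^{sK}‖`. -/
theorem bcd_is_aps {K : ℕ} (hK : 0 < K) (nb : Fin K → ℕ)
    (d : (k : Fin K) → EuclideanSpace ℝ (Fin (nb k)) → ℝ)
    (hd : ∀ k, ConvexOn ℝ univ (d k))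
    (f₁ f₂ : PiLp 2 (fun k : Fin K => EuclideanSpace ℝ (Fin (nb k))) → ℝ)
    (hf₁ : ∀ x, f₁ x = ∑ k, d k (x k))
    (hf₂ : ConvexOn ℝ univ f₂)
    (g : PiLp 2 (fun k : Fin K => EuclideanSpace ℝ (Fin (nb k))) →
      PiLp 2 (fun k : Fin K => EuclideanSpace ℝ (Fin (nb k))))
    (hg : ∀ x, HasGradientAt f₂ (g x) x)
    (L : ℝ) (hL : 0 ≤ L) (hLip : ∀ x y, ‖g x - g y‖ ≤ L * ‖x - y‖)
    (γ : ℝ) (hγ : 0 < γ)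
    (hblock : ∀ (x : PiLp 2 (fun k : Fin K => EuclideanSpace ℝ (Fin (nb k))))
      (k : Fin K) (Δ : EuclideanSpace ℝ (Fin (nb k))),
      f₂ (WithLp.toLp 2 (Function.update x k (x k + Δ))) - f₂ x - ⟪g x k, Δ⟫ ≥ γ * ‖Δ‖ ^ 2)
    (F : PiLp 2 (fun k : Fin K => EuclideanSpace ℝ (Fin (nb k))) → ℝ)
    (hF : ∀ x, F x = f₁ x + f₂ x)
    (x : ℕ → PiLp 2 (fun k : Fin K => EuclideanSpace ℝ (Fin (nb k))))
    (hBCD : ∀ r : ℕ,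
      x (r + 1) = Function.update (x r) (⟨r % K, Nat.mod_lt r hK⟩ : Fin K)
        (x (r + 1) ⟨r % K, Nat.mod_lt r hK⟩) ∧
      ∀ y : EuclideanSpace ℝ (Fin (nb ⟨r % K, Nat.mod_lt r hK⟩)),
        F (x (r + 1)) ≤ F (WithLp.toLp 2 (Function.update (x r) (⟨r % K, Nat.mod_lt r hK⟩ : Fin K) y))) :
    ∀ s : ℕ, ∃ e : PiLp 2 (fun k : Fin K => EuclideanSpace ℝ (Fin (nb k))),
      IsProx f₁ (x (s * K) - g (x (s * K)) + e) (x ((s + 1) * K)) ∧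
      ‖e‖ ≤ (K : ℝ) * (L + 1) * ‖x ((s + 1) * K) - x (s * K)‖ := by
  intro s
  have hmod : ∀ m : ℕ, m < K → (s * K + m) % K = m := by
    intro m hm
    rw [Nat.add_comm, Nat.add_mul_mod_self_right]
    exact Nat.mod_eq_of_lt hm
  -- the update rule, componentwise, off the active block
  have hne : ∀ (r : ℕ) (j : Fin K), (j : ℕ) ≠ r % K → x (r + 1) j = x r j := by
    intro r j hj
    have h1 := congrFun (hBCD r).1 j
    rw [h1]
    exact Function.update_of_ne (Fin.ne_of_val_ne hj) _ _
  -- blocks not yet updated in the cycle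
  have hB : ∀ m : ℕ, ∀ j : Fin K, m ≤ (j : ℕ) → x (s * K + m) j = x (s * K) j := by
    intro m
    induction m with
    | zero => intro j _; rfl
    | succ m ih =>
      intro j hj
      have e1 : x (s * K + m + 1) j = x (s * K + m) j := by
        refine hne (s * K + m) j ?_
        rw [hmod m (by omega)]
        omega
      have e2 : s * K + (m + 1) = s * K + m + 1 := by omega
      rw [e2, e1, ih j (by omega)]
  -- blocks already updated in the cycle are frozen
  have hA : ∀ m : ℕ, m ≤ K → ∀ j : Fin K, (j : ℕ) < m →
      x (s * K + m) j = x (s * K + (j : ℕ) + 1) j := by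
    intro m
    induction m with
    | zero => intro _ j hj; exact absurd hj (Nat.not_lt_zero _)
    | succ m ih =>
      intro hmK j hj
      rcases Nat.lt_or_ge (j : ℕ) m with h' | h'
      · have e1 : x (s * K + m + 1) j = x (s * K + m) j := by
          refine hne (s * K + m) j ?_
          rw [hmod m (by omega)]
          omega
        have e2 : s * K + (m + 1) = s * K + m + 1 := by omega
        rw [e2, e1]
        exact ih (by omega) j h'
      · have hjm : (j : ℕ) = m := by omega
        rw [show s * K + (m + 1) = s * K + (j : ℕ) + 1 by omega]
  have hpk : ∀ k : Fin K, x ((s + 1) * K) k = x (s * K + (k : ℕ) + 1) k := by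
    intro k
    rw [show (s + 1) * K = s * K + K by ring]
    exact hA K le_rfl k k.isLt
  have hidx : ∀ k : Fin K,
      (⟨(s * K + (k : ℕ)) % K, Nat.mod_lt _ hK⟩ : Fin K) = k := by
    intro k
    exact Fin.ext (by simpa using hmod (k : ℕ) k.isLt)
  have hupd : ∀ k : Fin K, x (s * K + (k : ℕ) + 1)
      = Function.update (x (s * K + (k : ℕ))) k (x (s * K + (k : ℕ) + 1) k) := by
    intro k
    have h := (hBCD (s * K + (k : ℕ))).1
    rw [hidx k] at h
    exact h
  -- block optimality
  have hmin : ∀ (k : Fin K) (y : EuclideanSpace ℝ (Fin (nb k))),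
      d k (x (s * K + (k : ℕ) + 1) k) + f₂ (x (s * K + (k : ℕ) + 1))
        ≤ d k y + f₂ (WithLp.toLp 2 (Function.update (x (s * K + (k : ℕ))) k y)) := by
    intro k y
    have h := hBCD (s * K + (k : ℕ))
    rw [hidx k] at h
    have h2 := h.2 y
    rw [hF, hF, hf₁, hf₁] at h2
    simp only [PiLp.toLp_apply] at h2
    have hs1 : ∑ j, d j (x (s * K + (k : ℕ) + 1) j)
        = d k (x (s * K + (k : ℕ) + 1) k)
          + ∑ j ∈ Finset.univ.erase k, d j (x (s * K + (k : ℕ)) j) := by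
      rw [← Finset.add_sum_erase Finset.univ
        (fun j => d j (x (s * K + (k : ℕ) + 1) j)) (Finset.mem_univ k)]
      congr 1
      refine Finset.sum_congr rfl fun j hj => ?_
      have hjk : (j : ℕ) ≠ (s * K + (k : ℕ)) % K := by
        rw [hmod (k : ℕ) k.isLt]
        exact fun hc => (Finset.ne_of_mem_erase hj) (Fin.ext hc)
      rw [hne (s * K + (k : ℕ)) j hjk]
    have hs2 : ∑ j, d j (Function.update (x (s * K + (k : ℕ))) k y j)
        = d k y + ∑ j ∈ Finset.univ.erase k, d j (x (s * K + (k : ℕ)) j) := by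
      rw [← Finset.add_sum_erase Finset.univ
        (fun j => d j (Function.update (x (s * K + (k : ℕ))) k y j)) (Finset.mem_univ k)]
      congr 1
      · rw [Function.update_self]
      · refine Finset.sum_congr rfl fun j hj => ?_
        rw [Function.update_of_ne (Finset.ne_of_mem_erase hj)]
    rw [hs1, hs2] at h2
    linarith
  -- per-block subgradient inequality
  have hsub : ∀ (k : Fin K) (y : EuclideanSpace ℝ (Fin (nb k))),
      d k (x (s * K + (k : ℕ) + 1) k)
        ≤ d k y + ⟪g (x (s * K + (k : ℕ) + 1)) k, y - x (s * K + (k : ℕ) + 1) k⟫ := by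
    intro k y
    exact block_subgrad f₂ g hg L hL hLip k (d k) (hd k)
      (x (s * K + (k : ℕ))) (x (s * K + (k : ℕ) + 1)) (hupd k) (hmin k) y
  -- the error vector
  set e : PiLp 2 (fun k : Fin K => EuclideanSpace ℝ (Fin (nb k))) :=
    WithLp.toLp 2 (fun k => (x ((s + 1) * K) k - x (s * K) k)
      + (g (x (s * K)) k - g (x (s * K + (k : ℕ) + 1)) k)) with he
  refine ⟨e, ?_, ?_⟩
  · -- IsProx
    intro y
    set z := x (s * K) - g (x (s * K)) + e with hz
    have hzk : ∀ k : Fin K, z k = x ((s + 1) * K) k - g (x (s * K + (k : ℕ) + 1)) k := by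
      intro k
      rw [hz]
      simp only [PiLp.add_apply, PiLp.sub_apply, he, PiLp.toLp_apply]
      abel
    rw [hf₁, hf₁, PiLp.norm_sq_eq_of_L2, PiLp.norm_sq_eq_of_L2, Finset.mul_sum, Finset.mul_sum,
      ← Finset.sum_add_distrib, ← Finset.sum_add_distrib]
    refine Finset.sum_le_sum fun k _ => ?_
    have hPk : (x ((s + 1) * K) - z) k = g (x (s * K + (k : ℕ) + 1)) k := by
      rw [PiLp.sub_apply, hzk k, hpk k]
      abel
    have hYk : (y - z) k = (y k - x (s * K + (k : ℕ) + 1) k)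
        + g (x (s * K + (k : ℕ) + 1)) k := by
      rw [PiLp.sub_apply, hzk k, hpk k]
      abel
    rw [hPk, hYk, norm_add_sq_real]
    have hsubk := hsub k (y k)
    rw [hpk k]
    have hcomm := real_inner_comm (y k - x (s * K + (k : ℕ) + 1) k)
      (g (x (s * K + (k : ℕ) + 1)) k)
    linarith [sq_nonneg ‖y k - x (s * K + (k : ℕ) + 1) k‖, hsubk, hcomm]
  · -- norm bound
    set D := x ((s + 1) * K) - x (s * K) with hD
    have hDnn : (0:ℝ) ≤ ‖D‖ := norm_nonneg _
    have hxk : ∀ k : Fin K, ‖x (s * K) - x (s * K + (k : ℕ) + 1)‖ ≤ ‖D‖ := by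
      intro k
      refine le_of_sq_le_sq' hDnn ?_
      rw [PiLp.norm_sq_eq_of_L2, PiLp.norm_sq_eq_of_L2]
      refine Finset.sum_le_sum fun j _ => ?_
      rw [PiLp.sub_apply]
      have hDj : D j = x ((s + 1) * K) j - x (s * K) j := by
        rw [hD, PiLp.sub_apply]
      rcases Nat.lt_or_ge (j : ℕ) ((k : ℕ) + 1) with hj | hj
      · have e1 : x (s * K + (k : ℕ) + 1) j = x ((s + 1) * K) j := by
          rw [show s * K + (k : ℕ) + 1 = s * K + ((k : ℕ) + 1) by omega,
            hA ((k : ℕ) + 1) (by omega) j hj, hpk j]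
        have goal2 : ‖x (s * K) j - x (s * K + (k : ℕ) + 1) j‖ = ‖D j‖ := by
          rw [e1, hDj, norm_sub_rev]
        calc ‖x (s * K) j - x (s * K + (k : ℕ) + 1) j‖ ^ 2
            = ‖D j‖ ^ 2 := by rw [goal2]
          _ ≤ ‖D j‖ ^ 2 := le_rfl
      · have e1 : x (s * K + (k : ℕ) + 1) j = x (s * K) j := by
          rw [show s * K + (k : ℕ) + 1 = s * K + ((k : ℕ) + 1) by omega]
          exact hB ((k : ℕ) + 1) j hj
        rw [e1, sub_self, norm_zero, zero_pow (two_ne_zero)]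
        positivity
    have hek : ∀ k : Fin K, ‖e k‖ ≤ (L + 1) * ‖D‖ := by
      intro k
      have h1 : ‖x ((s + 1) * K) k - x (s * K) k‖ ≤ ‖D‖ := by
        have h0 := piLp_apply_norm_le D k
        simpa [hD] using h0
      have h2 : ‖g (x (s * K)) k - g (x (s * K + (k : ℕ) + 1)) k‖
          ≤ L * ‖D‖ := by
        have h3 : ‖g (x (s * K)) k - g (x (s * K + (k : ℕ) + 1)) k‖
            ≤ ‖g (x (s * K)) - g (x (s * K + (k : ℕ) + 1))‖ := by
          have h3' := piLp_apply_norm_le (g (x (s * K)) - g (x (s * K + (k : ℕ) + 1))) k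
          simpa using h3'
        have h4 := hLip (x (s * K)) (x (s * K + (k : ℕ) + 1))
        have h5 := hxk k
        calc ‖g (x (s * K)) k - g (x (s * K + (k : ℕ) + 1)) k‖
            ≤ ‖g (x (s * K)) - g (x (s * K + (k : ℕ) + 1))‖ := h3
          _ ≤ L * ‖x (s * K) - x (s * K + (k : ℕ) + 1)‖ := h4
          _ ≤ L * ‖D‖ := mul_le_mul_of_nonneg_left h5 hL
      simp only [he, PiLp.toLp_apply]
      calc ‖(x ((s + 1) * K) k - x (s * K) k)
            + (g (x (s * K)) k - g (x (s * K + (k : ℕ) + 1)) k)‖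
          ≤ ‖x ((s + 1) * K) k - x (s * K) k‖
            + ‖g (x (s * K)) k - g (x (s * K + (k : ℕ) + 1)) k‖ := norm_add_le _ _
        _ ≤ ‖D‖ + L * ‖D‖ := add_le_add h1 h2
        _ = (L + 1) * ‖D‖ := by ring
    refine le_of_sq_le_sq' (by positivity) ?_
    rw [PiLp.norm_sq_eq_of_L2]
    have hK1 : (1:ℝ) ≤ (K:ℝ) := by exact_mod_cast hK
    calc ∑ k, ‖e k‖ ^ 2
        ≤ ∑ _k : Fin K, ((L + 1) * ‖D‖) ^ 2 := by
          refine Finset.sum_le_sum fun k _ => ?_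
          have h := hek k
          nlinarith [norm_nonneg (e k)]
      _ = (K : ℝ) * ((L + 1) * ‖D‖) ^ 2 := by
          rw [Finset.sum_const, Finset.card_univ, Fintype.card_fin, nsmul_eq_mul]
      _ ≤ ((K : ℝ) * (L + 1) * ‖D‖) ^ 2 := by nlinarith [mul_nonneg (by linarith : (0:ℝ) ≤ L + 1) hDnn]
end
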